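/- arXiv:1803.08095 — 9 statements merged into one kernel-verified Lean document; each statement's English description precedes it below -/
import Mathlib

section
/- For |q| < 1 and any injective function ψ : ℕ → ℕ (with positive values), the infinite product ∏_{n≥1} 1/(1 - q^{ψ(n)}) equals the double infinite product ∏_{i≥0} ∏_{n≥1} (1 + q^{2^i · ψ(n)}). -/
open Complex Filter Finset Topology

/-- Bound on the complex log near 1. -/
lemma aux_norm_log_le {r : ℝ} (hr : r < 1) {z : ℂ} (hz : ‖z‖ ≤ r) :
    ‖Complex.log (1 + z)‖ ≤ ((1 - r)⁻¹ / 2 + 1) * ‖z‖ := by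
  have hz1 : ‖z‖ < 1 := lt_of_le_of_lt hz hr
  have h0 : (0:ℝ) ≤ ‖z‖ := norm_nonneg z
  have := Complex.norm_log_one_add_le hz1
  have hinv : (1 - ‖z‖)⁻¹ ≤ (1 - r)⁻¹ := by
    apply inv_anti₀ (by linarith) (by linarith)
  calc ‖Complex.log (1 + z)‖ ≤ ‖z‖ ^ 2 * (1 - ‖z‖)⁻¹ / 2 + ‖z‖ := this
    _ ≤ ‖z‖ * (1 - r)⁻¹ / 2 + ‖z‖ := by
        have h2 : ‖z‖ ^ 2 ≤ ‖z‖ := by nlinarith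
        have hinv0 : (0:ℝ) ≤ (1 - ‖z‖)⁻¹ := inv_nonneg.mpr (by linarith)
        have : ‖z‖ ^ 2 * (1 - ‖z‖)⁻¹ ≤ ‖z‖ * (1 - r)⁻¹ := by
          apply mul_le_mul h2 hinv hinv0 h0
        linarith
    _ = ((1 - r)⁻¹ / 2 + 1) * ‖z‖ := by ring

lemma aux_one_add_ne_zero {z : ℂ} (hz : ‖z‖ < 1) : (1 : ℂ) + z ≠ 0 := by
  intro h
  have : z = -1 := by linear_combination h
  rw [this] at hz
  simp at hz

/-- Multipliability of a family `1 + g i` given summability of norms. -/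
lemma aux_multipliable {ι : Type*} {r : ℝ} (hr : r < 1) (g : ι → ℂ)
    (hg : ∀ i, ‖g i‖ ≤ r) (hs : Summable fun i => ‖g i‖) :
    Multipliable fun i => (1 : ℂ) + g i := by
  exact multipliable_one_add_of_summable hs

/-- Euler's identity: `(1-x)⁻¹ = ∏ (1 + x^(2^i))`. -/
lemma aux_euler {x : ℂ} (hx : ‖x‖ < 1) :
    HasProd (fun i : ℕ => (1 : ℂ) + x ^ 2 ^ i) (1 - x)⁻¹ := by
  have hx0 : (0:ℝ) ≤ ‖x‖ := norm_nonneg x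
  have hm : Multipliable fun i : ℕ => (1 : ℂ) + x ^ 2 ^ i := by
    apply aux_multipliable hx (fun i => x ^ 2 ^ i)
    · intro i
      rw [norm_pow]
      calc ‖x‖ ^ 2 ^ i ≤ ‖x‖ ^ 1 := by
            apply pow_le_pow_of_le_one hx0 hx.le (Nat.one_le_two_pow)
        _ = ‖x‖ := pow_one _
    · apply Summable.of_nonneg_of_le (fun i => norm_nonneg _)
        (fun i => ?_) (summable_geometric_of_lt_one hx0 hx)
      rw [norm_pow]
      exact pow_le_pow_of_le_one hx0 hx.le (Nat.le_of_lt (Nat.lt_two_pow_self (n := i)))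
  rw [hm.hasProd_iff_tendsto_nat]
  have hx1 : (1 : ℂ) - x ≠ 0 := by
    intro h
    have : x = 1 := by linear_combination -h
    rw [this] at hx; simp at hx
  have key : ∀ n : ℕ, ∏ i ∈ Finset.range n, ((1:ℂ) + x ^ 2 ^ i)
      = (1 - x)⁻¹ * (1 - x ^ 2 ^ n) := by
    intro n
    induction n with
    | zero => simp [inv_mul_cancel₀ hx1]
    | succ n ih =>
        rw [Finset.prod_range_succ, ih]
        have : x ^ 2 ^ (n + 1) = (x ^ 2 ^ n) ^ 2 := by
          rw [← pow_mul, pow_succ]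
        rw [this]; ring
  simp_rw [key]
  have h2 : Tendsto (fun n : ℕ => x ^ 2 ^ n) atTop (𝓝 0) := by
    have h1 : Tendsto (fun k : ℕ => x ^ k) atTop (𝓝 0) :=
      tendsto_pow_atTop_nhds_zero_of_norm_lt_one hx
    exact h1.comp (tendsto_pow_atTop_atTop_of_one_lt (α := ℕ) one_lt_two)
  have := ((tendsto_const_nhds (x := (1:ℂ)).sub h2).const_mul ((1 - x)⁻¹))
  simpa using this

theorem stmt_0 (q : ℂ) (hq : ‖q‖ < 1) (ψ : ℕ → ℕ)
    (hinj : Function.Injective ψ) (hpos : ∀ n, 1 ≤ ψ n) :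
    ∏' n : ℕ, ((1 : ℂ) - q ^ ψ n)⁻¹ =
      ∏' i : ℕ, ∏' n : ℕ, ((1 : ℂ) + q ^ (2 ^ i * ψ n)) := by
  have hq0 : (0:ℝ) ≤ ‖q‖ := norm_nonneg q
  -- norm bound of each factor's summand
  have hbd : ∀ i n : ℕ, ‖q ^ (2 ^ i * ψ n)‖ ≤ ‖q‖ := by
    intro i n
    rw [norm_pow]
    calc ‖q‖ ^ (2 ^ i * ψ n) ≤ ‖q‖ ^ 1 := by
          apply pow_le_pow_of_le_one hq0 hq.le
          exact le_trans (hpos n) (Nat.le_mul_of_pos_left _ (Nat.two_pow_pos i))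
      _ = ‖q‖ := pow_one _
  -- summability of norms over ℕ × ℕ
  have hgeo : Summable fun k : ℕ => ‖q‖ ^ k := summable_geometric_of_lt_one hq0 hq
  have hψ : Summable fun n : ℕ => ‖q‖ ^ ψ n := hgeo.comp_injective hinj
  have hsum : Summable fun p : ℕ × ℕ => ‖q ^ (2 ^ p.1 * ψ p.2)‖ := by
    have hmul : Summable fun p : ℕ × ℕ => ‖q‖ ^ p.1 * ‖q‖ ^ ψ p.2 :=
      Summable.mul_of_nonneg (f := fun k : ℕ => ‖q‖ ^ k) (g := fun n : ℕ => ‖q‖ ^ ψ n)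
        hgeo hψ (fun _ => pow_nonneg hq0 _) (fun _ => pow_nonneg hq0 _)
    apply Summable.of_nonneg_of_le (fun p => norm_nonneg _) (fun p => ?_) hmul
    rw [norm_pow, ← pow_add]
    apply pow_le_pow_of_le_one hq0 hq.le
    have h1 : p.1 + ψ p.2 ≤ (p.1 + 1) * ψ p.2 := by
      have := hpos p.2
      nlinarith
    have h0 : p.1 + 1 ≤ 2 ^ p.1 := Nat.lt_two_pow_self (n := p.1)
    have h2 : (p.1 + 1) * ψ p.2 ≤ 2 ^ p.1 * ψ p.2 :=
      Nat.mul_le_mul_right (ψ p.2) h0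
    exact le_trans h1 h2
  -- multipliability of the double family
  have hmult : Multipliable (Function.uncurry
      (fun i n : ℕ => (1 : ℂ) + q ^ (2 ^ i * ψ n))) := by
    apply aux_multipliable hq (fun p : ℕ × ℕ => q ^ (2 ^ p.1 * ψ p.2))
      (fun p => hbd p.1 p.2) hsum
  -- pointwise Euler identity
  have heuler : ∀ n : ℕ, ((1 : ℂ) - q ^ ψ n)⁻¹
      = ∏' i : ℕ, ((1 : ℂ) + q ^ (2 ^ i * ψ n)) := by
    intro n
    have hxn : ‖q ^ ψ n‖ < 1 := by
      rw [norm_pow]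
      calc ‖q‖ ^ ψ n ≤ ‖q‖ ^ 1 := pow_le_pow_of_le_one hq0 hq.le (hpos n)
        _ = ‖q‖ := pow_one _
        _ < 1 := hq
    have := (aux_euler hxn).tprod_eq
    rw [← this]
    apply tprod_congr
    intro i
    rw [← pow_mul, Nat.mul_comm]
  have hrow : ∀ i : ℕ, Multipliable fun n : ℕ => (1 : ℂ) + q ^ (2 ^ i * ψ n) := by
    intro i
    apply aux_multipliable hq _ (fun n => hbd i n)
    apply Summable.of_nonneg_of_le (fun n => norm_nonneg _) (fun n => ?_) hψ
    rw [norm_pow]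
    apply pow_le_pow_of_le_one hq0 hq.le
    exact Nat.le_mul_of_pos_left _ (Nat.two_pow_pos i)
  have hcol : ∀ n : ℕ, Multipliable fun i : ℕ => (1 : ℂ) + q ^ (2 ^ i * ψ n) := by
    intro n
    apply aux_multipliable hq _ (fun i => hbd i n)
    apply Summable.of_nonneg_of_le (fun i => norm_nonneg _) (fun i => ?_) hgeo
    rw [norm_pow]
    apply pow_le_pow_of_le_one hq0 hq.le
    calc i ≤ 2 ^ i := Nat.le_of_lt (Nat.lt_two_pow_self (n := i))
      _ = 2 ^ i * 1 := (mul_one _).symm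
      _ ≤ 2 ^ i * ψ n := Nat.mul_le_mul_left _ (hpos n)
  rw [tprod_congr heuler]
  exact Multipliable.tprod_comm' (f := fun i n : ℕ => (1 : ℂ) + q ^ (2 ^ i * ψ n)) hmult hrow hcol
end

section
/- For |q| < 1, any injective ψ : ℕ → ℕ with positive values, and any positive integer α, the infinite product ∏_{n≥1} 1/(1 - q^{ψ(n)}) equals ∏_{i≥0} ∏_{n≥1} (1 + q^{(α+1)^i ψ(n)} + q^{2(α+1)^i ψ(n)} + ... + q^{α (α+1)^i ψ(n)}). -/
set_option maxHeartbeats 1000000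

open Finset Filter Topology

/-- general multipliability criterion -/
lemma mult_aux {ι : Type*} (f : ι → ℂ) (h0 : ∀ i, f i ≠ 0)
    (hs : Summable fun i => ‖f i - 1‖) : Multipliable f := by
  apply Complex.multipliable_of_summable_log
  have hev : ∀ᶠ i in Filter.cofinite, ‖Complex.log (f i)‖ ≤ (3/2) * ‖f i - 1‖ := by
    filter_upwards [hs.tendsto_cofinite_zero.eventually
      (ge_mem_nhds (by norm_num : (0:ℝ) < 1/2))] with i hi
    have h2 := Complex.norm_log_one_add_half_le_self (z := f i - 1) (by simpa using hi)
    have h3 : (1 : ℂ) + (f i - 1) = f i := by ring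
    rwa [h3] at h2
  exact Summable.of_norm_bounded_eventually (hs.mul_left (3/2)) hev

lemma key_mul (x : ℂ) (m : ℕ) : (1 - x) * ∑ k ∈ range m, x ^ k = 1 - x ^ m := by
  have := geom_sum_mul x m
  linear_combination -this

lemma S_key (x : ℂ) (e m : ℕ) :
    (1 - x ^ e) * ∑ k ∈ range m, x ^ (k * e) = 1 - x ^ (e * m) := by
  have h : (∑ k ∈ range m, x ^ (k * e)) = ∑ k ∈ range m, (x ^ e) ^ k := by
    refine Finset.sum_congr rfl fun k _ => ?_
    rw [← pow_mul, mul_comm]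
  rw [h, key_mul, ← pow_mul]

lemma pow_norm_lt (x : ℂ) (hx : ‖x‖ < 1) {e : ℕ} (he : 1 ≤ e) : ‖x ^ e‖ < 1 := by
  rw [norm_pow]
  calc ‖x‖ ^ e ≤ ‖x‖ ^ 1 := pow_le_pow_of_le_one (norm_nonneg x) hx.le he
    _ = ‖x‖ := pow_one _
    _ < 1 := hx

lemma S_ne_zero (x : ℂ) (hx : ‖x‖ < 1) {e m : ℕ} (he : 1 ≤ e) (hm : 1 ≤ m) :
    (∑ k ∈ range m, x ^ (k * e)) ≠ 0 := by
  intro h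
  have h2 := S_key x e m
  rw [h, mul_zero] at h2
  have h3 : x ^ (e * m) = 1 := by linear_combination h2
  have hlt : ‖x ^ (e * m)‖ < 1 :=
    pow_norm_lt x hx (Nat.one_le_iff_ne_zero.mpr (by positivity))
  rw [h3] at hlt; simp at hlt

lemma S_sub_one_norm (x : ℂ) (hx : ‖x‖ ≤ 1) (α e : ℕ) :
    ‖(∑ k ∈ range (α + 1), x ^ (k * e)) - 1‖ ≤ α * ‖x‖ ^ e := by
  have h1 : (∑ k ∈ range (α + 1), x ^ (k * e)) - 1
      = ∑ k ∈ range α, x ^ ((k + 1) * e) := by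
    rw [Finset.sum_range_succ' (fun k => x ^ (k * e)) α]
    simp
  rw [h1]
  calc ‖∑ k ∈ range α, x ^ ((k + 1) * e)‖ ≤ ∑ k ∈ range α, ‖x ^ ((k + 1) * e)‖ :=
        norm_sum_le _ _
    _ ≤ ∑ _k ∈ range α, ‖x‖ ^ e := by
        refine Finset.sum_le_sum fun k _ => ?_
        rw [norm_pow]
        exact pow_le_pow_of_le_one (norm_nonneg x) hx (Nat.le_mul_of_pos_left e k.succ_pos)
    _ = α * ‖x‖ ^ e := by simp [mul_comm]

/-- Lemma A: single variable. -/
lemma lemA (x : ℂ) (hx : ‖x‖ < 1) (α : ℕ) (hα : 1 ≤ α) :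
    HasProd (fun i : ℕ => ∑ k ∈ range (α + 1), x ^ (k * (α + 1) ^ i)) (1 - x)⁻¹ := by
  have hxne : (1 : ℂ) - x ≠ 0 := by
    intro h
    have h1 : x = 1 := by linear_combination -h
    rw [h1] at hx; simp at hx
  set S : ℕ → ℂ := fun i => ∑ k ∈ range (α + 1), x ^ (k * (α + 1) ^ i) with hS
  have hepow : ∀ i : ℕ, i + 1 ≤ (α + 1) ^ i := fun i =>
    le_trans (Nat.succ_le_of_lt (Nat.lt_two_pow_self (n := i))) (Nat.pow_le_pow_left (by omega) i)
  have hmul : Multipliable S := by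
    apply mult_aux _ (fun i => S_ne_zero x hx (Nat.one_le_pow _ _ (by omega)) (by omega))
    apply Summable.of_norm_bounded (g := fun i => (α : ℝ) * ‖x‖ ^ (i + 1))
    · have : Summable (fun i : ℕ => ‖x‖ ^ i) := summable_geometric_of_lt_one (norm_nonneg x) hx
      exact ((this.comp_injective (add_left_injective 1)).mul_left _)
    · intro i
      rw [norm_norm]
      refine (S_sub_one_norm x hx.le α _).trans ?_
      have := pow_le_pow_of_le_one (norm_nonneg x) hx.le (hepow i)
      have hα0 : (0:ℝ) ≤ α := Nat.cast_nonneg α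
      nlinarith
  have hkey : ∀ N, (1 - x) * ∏ i ∈ range N, S i = 1 - x ^ ((α + 1) ^ N) := by
    intro N
    induction N with
    | zero => simp [hS]
    | succ N ih =>
      rw [Finset.prod_range_succ, ← mul_assoc, ih, hS]
      have := S_key x ((α + 1) ^ N) (α + 1)
      rw [this, ← pow_succ]
  have hpartial : ∀ N, ∏ i ∈ range N, S i = (1 - x ^ ((α + 1) ^ N)) * (1 - x)⁻¹ := by
    intro N
    have h := hkey N
    field_simp
    linear_combination h
  have htend : Tendsto (fun N => ∏ i ∈ range N, S i) atTop (𝓝 ((1 - x)⁻¹)) := by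
    simp only [hpartial]
    have h1 : Tendsto (fun N : ℕ => x ^ ((α + 1) ^ N)) atTop (𝓝 0) :=
      (tendsto_pow_atTop_nhds_zero_of_norm_lt_one hx).comp
        (tendsto_pow_atTop_atTop_of_one_lt (by omega))
    have h2 := ((tendsto_const_nhds (x := (1:ℂ))).sub h1).mul (tendsto_const_nhds (x := (1 - x)⁻¹))
    simpa using h2
  have h2 := hmul.hasProd.tendsto_prod_nat
  have h3 : (∏' i, S i) = (1 - x)⁻¹ := tendsto_nhds_unique h2 htend
  rw [← h3]
  exact hmul.hasProd

theorem stmt_1 (q : ℂ) (hq : ‖q‖ < 1) (ψ : ℕ → ℕ)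
    (hinj : Function.Injective ψ) (hpos : ∀ n, 1 ≤ ψ n)
    (α : ℕ) (hα : 1 ≤ α) :
    ∏' n : ℕ, ((1 : ℂ) - q ^ ψ n)⁻¹ =
      ∏' i : ℕ, ∏' n : ℕ, ∑ k ∈ Finset.range (α + 1),
        q ^ (k * ((α + 1) ^ i * ψ n)) := by
  set r : ℝ := ‖q‖ with hr
  have hr0 : 0 ≤ r := norm_nonneg q
  set F : ℕ → ℕ → ℂ := fun i n => ∑ k ∈ range (α + 1), q ^ (k * ((α + 1) ^ i * ψ n)) with hF
  have hqn : ∀ n, ‖q ^ ψ n‖ < 1 := fun n => pow_norm_lt q hq (hpos n)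
  have hepos : ∀ i n, 1 ≤ (α + 1) ^ i * ψ n := by
    intro i n
    have h1 : 1 ≤ (α + 1) ^ i := Nat.one_le_pow _ _ (by omega)
    have h2 := hpos n
    calc 1 = 1 * 1 := rfl
      _ ≤ (α + 1) ^ i * ψ n := Nat.mul_le_mul h1 h2
  have hFrw : ∀ n, (fun i => F i n)
      = fun i => ∑ k ∈ range (α + 1), (q ^ ψ n) ^ (k * (α + 1) ^ i) := by
    intro n
    funext i
    refine Finset.sum_congr rfl fun k _ => ?_
    rw [← pow_mul]
    ring_nf
  have hcol : ∀ n, HasProd (fun i => F i n) ((1 : ℂ) - q ^ ψ n)⁻¹ := by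
    intro n
    rw [hFrw n]
    exact lemA (q ^ ψ n) (hqn n) α hα
  have hne : ∀ i n, F i n ≠ 0 := fun i n =>
    S_ne_zero q hq (hepos i n) (by omega)
  have hbound : ∀ i n, ‖F i n - 1‖ ≤ (α : ℝ) * r ^ ((α + 1) ^ i * ψ n) := fun i n =>
    S_sub_one_norm q hq.le α _
  have hsumψ : Summable fun n => r ^ ψ n :=
    (summable_geometric_of_lt_one hr0 hq).comp_injective hinj
  have hepow : ∀ i : ℕ, i + 1 ≤ (α + 1) ^ i := fun i =>
    le_trans (Nat.succ_le_of_lt (Nat.lt_two_pow_self (n := i))) (Nat.pow_le_pow_left (by omega) i)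
  have hexp : ∀ i n, i + ψ n ≤ (α + 1) ^ i * ψ n := by
    intro i n
    have h1 := hepow i
    have h2 := hpos n
    calc i + ψ n ≤ (i + 1) * ψ n := by nlinarith
      _ ≤ (α + 1) ^ i * ψ n := Nat.mul_le_mul_right _ h1
  -- Multipliable of uncurried function
  have hsum2 : Summable fun p : ℕ × ℕ => ‖Function.uncurry F p - 1‖ := by
    have hmaj : Summable fun p : ℕ × ℕ => (α : ℝ) * (r ^ p.1 * r ^ ψ p.2) :=
      ((summable_geometric_of_lt_one hr0 hq).mul_of_nonneg hsumψ
        (fun i => pow_nonneg hr0 i) (fun n => pow_nonneg hr0 _)).mul_left _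
    refine Summable.of_norm_bounded hmaj ?_
    rintro ⟨i, n⟩
    rw [norm_norm]
    refine (hbound i n).trans ?_
    rw [← pow_add]
    have h5 := pow_le_pow_of_le_one hr0 hq.le (hexp i n)
    have hα0 : (0:ℝ) ≤ α := Nat.cast_nonneg α
    nlinarith
  have hunc : Multipliable (Function.uncurry F) :=
    mult_aux (Function.uncurry F) (fun p => hne p.1 p.2) hsum2
  -- Multipliable of rows
  have hrow : ∀ i, Multipliable (F i) := by
    intro i
    refine mult_aux (F i) (hne i) ?_
    refine Summable.of_norm_bounded (hsumψ.mul_left (α : ℝ)) fun n => ?_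
    rw [norm_norm]
    refine (hbound i n).trans ?_
    have h1 : ψ n ≤ (α + 1) ^ i * ψ n :=
      Nat.le_mul_of_pos_left _ (Nat.pow_pos (n := i) (by omega))
    have h5 := pow_le_pow_of_le_one hr0 hq.le h1
    have hα0 : (0:ℝ) ≤ α := Nat.cast_nonneg α
    nlinarith
  have hswap : ∏' (n) (i), F i n = ∏' (i) (n), F i n :=
    Multipliable.tprod_comm' hunc hrow (fun n => (hcol n).multipliable)
  calc ∏' n : ℕ, ((1 : ℂ) - q ^ ψ n)⁻¹ = ∏' (n) (i), F i n :=
        tprod_congr fun n => ((hcol n).tprod_eq).symm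
    _ = ∏' (i) (n), F i n := hswap
end

section
/- For |q| < 1, any injective ψ : ℕ → ℕ with positive values, any positive integer α, and any natural number I, the finite identity ∏_{n≥1} (1 - q^{(α+1)^{I+1} ψ(n)}) = ∏_{n≥1} (1 - q^{ψ(n)}) · ∏_{i=0}^{I} ∏_{n≥1} (1 + q^{(α+1)^i ψ(n)} + ... + q^{α(α+1)^i ψ(n)}) holds. -/
open Finset

private lemma mult_one_add (f : ℕ → ℂ) (hf : Summable f) :
    Multipliable (fun n ↦ 1 + f n) := by
  have h0 : Filter.Tendsto f Filter.atTop (nhds 0) := hf.tendsto_atTop_zero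
  have := Metric.tendsto_atTop.1 h0 (1/2) (by norm_num)
  obtain ⟨N, hN⟩ := this
  have hN' : ∀ n, ‖f (n + N)‖ ≤ 1/2 := by
    intro n
    have := hN (n + N) (Nat.le_add_left N n)
    simpa [dist_eq_norm] using this.le
  apply Multipliable.comp_nat_add (k := N)
  have hne : ∀ n, 1 + f (n + N) ≠ 0 := by
    intro n h
    have : ‖f (n + N)‖ = 1 := by
      have : f (n + N) = -1 := by linear_combination h
      simp [this]
    linarith [hN' n]
  have hlog : Summable fun n ↦ Complex.log (1 + f (n + N)) := by
    apply Summable.of_norm_bounded (g := fun n ↦ (3/2) * ‖f (n + N)‖)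
      (((summable_nat_add_iff N).2 hf.norm).mul_left _)
    intro n
    exact Complex.norm_log_one_add_half_le_self (hN' n)
  exact Complex.multipliable_of_summable_log hlog

theorem stmt_2 (q : ℂ) (hq : ‖q‖ < 1) (ψ : ℕ → ℕ)
    (hinj : Function.Injective ψ) (hpos : ∀ n, 1 ≤ ψ n)
    (α : ℕ) (hα : 1 ≤ α) (I : ℕ) :
    ∏' n : ℕ, ((1 : ℂ) - q ^ ((α + 1) ^ (I + 1) * ψ n)) =
      (∏' n : ℕ, ((1 : ℂ) - q ^ ψ n)) *
        ∏ i ∈ Finset.range (I + 1), ∏' n : ℕ,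
          ∑ k ∈ Finset.range (α + 1), q ^ (k * ((α + 1) ^ i * ψ n)) := by
  have hsum : ∀ m : ℕ, 1 ≤ m → Summable fun n ↦ q ^ (m * ψ n) := by
    intro m hm
    apply Summable.of_norm_bounded (g := fun n ↦ ‖q‖ ^ ψ n)
      ((summable_geometric_of_lt_one (norm_nonneg q) hq).comp_injective hinj)
    intro n
    rw [norm_pow]
    exact pow_le_pow_of_le_one (norm_nonneg q) hq.le
      (Nat.le_mul_of_pos_left _ hm)
  have key : ∀ m : ℕ, 1 ≤ m →
      ∏' n : ℕ, ((1 : ℂ) - q ^ ((α + 1) * m * ψ n)) =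
        (∏' n : ℕ, ((1 : ℂ) - q ^ (m * ψ n))) *
          ∏' n : ℕ, ∑ k ∈ Finset.range (α + 1), q ^ (k * (m * ψ n)) := by
    intro m hm
    have hmul1 : Multipliable fun n ↦ (1 : ℂ) - q ^ (m * ψ n) := by
      simpa [sub_eq_add_neg] using mult_one_add (fun n ↦ -(q ^ (m * ψ n))) (hsum m hm).neg
    have hmul2 : Multipliable fun n ↦ ∑ k ∈ Finset.range (α + 1), q ^ (k * (m * ψ n)) := by
      have hs : Summable fun n ↦ ∑ k ∈ Finset.range α, q ^ ((k + 1) * m * ψ n) :=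
        summable_sum fun k _ ↦ by
          simpa [mul_assoc] using hsum ((k + 1) * m) (Nat.mul_pos (Nat.succ_pos k) hm)
      apply (mult_one_add (fun n ↦ ∑ k ∈ Finset.range α, q ^ ((k + 1) * m * ψ n)) hs).congr
      intro n
      rw [Finset.sum_range_succ']
      simp [add_comm, mul_assoc]
    rw [← Multipliable.tprod_mul hmul1 hmul2]
    apply tprod_congr
    intro n
    have hg := geom_sum_mul (q ^ (m * ψ n)) (α + 1)
    have hpow : ∀ k : ℕ, q ^ (k * (m * ψ n)) = (q ^ (m * ψ n)) ^ k := by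
      intro k; rw [← pow_mul, mul_comm]
    have hpow2 : q ^ ((α + 1) * m * ψ n) = (q ^ (m * ψ n)) ^ (α + 1) := by
      rw [← pow_mul]; ring_nf
    rw [hpow2]
    simp only [hpow]
    generalize q ^ (m * ψ n) = x at hg ⊢
    linear_combination hg
  induction I with
  | zero =>
      have := key 1 le_rfl
      simpa [mul_comm] using this
  | succ I ih =>
      have hk := key ((α + 1) ^ (I + 1)) (Nat.one_le_pow _ _ (by omega))
      have he : ∀ n, (α + 1) ^ (I + 1 + 1) * ψ n = (α + 1) * (α + 1) ^ (I + 1) * ψ n := by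
        intro n; ring
      calc ∏' n : ℕ, ((1 : ℂ) - q ^ ((α + 1) ^ (I + 1 + 1) * ψ n))
          = ∏' n : ℕ, ((1 : ℂ) - q ^ ((α + 1) * (α + 1) ^ (I + 1) * ψ n)) := by
            exact tprod_congr fun n ↦ by rw [he n]
        _ = (∏' n : ℕ, ((1 : ℂ) - q ^ ((α + 1) ^ (I + 1) * ψ n))) *
              ∏' n : ℕ, ∑ k ∈ Finset.range (α + 1), q ^ (k * ((α + 1) ^ (I + 1) * ψ n)) := hk
        _ = _ := by
            rw [ih, mul_assoc]
            conv_rhs => rw [Finset.prod_range_succ]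
end

section
/- Let A be a set of positive integers, p^A(n) the number of partitions of n into parts from A, and p^A_α(n) the number of such partitions with each part appearing at most α times. Then for every n ≥ 1, p^A(n) = ∑ over all sequences (N_0, N_1, N_2, ...) of nonnegative integers with n = ∑_{i≥0} (α+1)^i N_i of the product ∏_{i≥0} p^A_α(N_i). -/
/-- Number of partitions of `n` with all parts in `A`. -/
noncomputable def pA (A : Set ℕ) (n : ℕ) : ℕ :=
  Nat.card {p : n.Partition // ∀ a ∈ p.parts, a ∈ A}

/-- Number of partitions of `n` with all parts in `A`, each part used at most `α` times. -/
noncomputable def pAres (A : Set ℕ) (α : ℕ) (n : ℕ) : ℕ :=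
  Nat.card {p : n.Partition // (∀ a ∈ p.parts, a ∈ A) ∧ ∀ a, p.parts.count a ≤ α}

open Finset

namespace Stmt4Aux

noncomputable def wgt (f : ℕ →₀ ℕ) : ℕ := f.sum fun a m => a * m

lemma wgt_add (f g : ℕ →₀ ℕ) : wgt (f + g) = wgt f + wgt g :=
  Finsupp.sum_add_index' (fun a => mul_zero a) (fun a m m' => mul_add a m m')

lemma wgt_zero : wgt 0 = 0 := by simp [wgt]

noncomputable def wgtHom : (ℕ →₀ ℕ) →+ ℕ where
  toFun := wgt
  map_zero' := wgt_zero
  map_add' := wgt_add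

lemma wgt_smul (k : ℕ) (f : ℕ →₀ ℕ) : wgt (k • f) = k * wgt f := by
  have := map_nsmul wgtHom k f
  simpa [wgtHom, smul_eq_mul, mul_comm] using this

lemma wgt_finset_sum {ι : Type*} (s : Finset ι) (f : ι → (ℕ →₀ ℕ)) :
    wgt (∑ i ∈ s, f i) = ∑ i ∈ s, wgt (f i) := map_sum wgtHom f s

lemma mul_le_wgt (f : ℕ →₀ ℕ) (a : ℕ) : a * f a ≤ wgt f := by
  by_cases h : a ∈ f.support
  · exact Finset.single_le_sum (f := fun a => a * f a) (fun i _ => Nat.zero_le _) h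
  · simp [Finsupp.notMem_support_iff.mp h]

lemma wgt_sum_eq (f : ℕ →₀ ℕ) {s : Finset ℕ} (hs : f.support ⊆ s) :
    wgt f = ∑ a ∈ s, a * f a :=
  Finsupp.sum_of_support_subset f hs _ (fun i _ => mul_zero i)

lemma eq_zero_of_wgt_eq_zero {A : Set ℕ} (hA : ∀ a ∈ A, 0 < a) {f : ℕ →₀ ℕ}
    (hsupp : ∀ a ∈ f.support, a ∈ A) (h : wgt f = 0) : f = 0 := by
  ext a
  by_contra ha
  have hmem : a ∈ f.support := Finsupp.mem_support_iff.mpr (by simpa using ha)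
  have h1 : 0 < a := hA a (hsupp a hmem)
  have h2 : 0 < a * f a := by
    have : f a ≠ 0 := by simpa using ha
    positivity
  have := mul_le_wgt f a
  omega

def dig (b m i : ℕ) : ℕ := m / b ^ i % b

lemma dig_lt {b : ℕ} (hb : 2 ≤ b) (m i : ℕ) : dig b m i < b :=
  Nat.mod_lt _ (by omega)

lemma dig_eq_zero {b m i : ℕ} (h : m < b ^ i) : dig b m i = 0 := by
  simp [dig, Nat.div_eq_of_lt h]

lemma sum_dig {b : ℕ} (m N : ℕ) :
    ∑ i ∈ range N, b ^ i * dig b m i = m % b ^ N := by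
  induction N with
  | zero => simp [Nat.mod_one]
  | succ N ih =>
    rw [Finset.sum_range_succ, ih, pow_succ, Nat.mod_mul]
    rfl

lemma sum_dig_eq {b : ℕ} {m N : ℕ} (h : m < b ^ N) :
    ∑ i ∈ range N, b ^ i * dig b m i = m := by
  rw [sum_dig, Nat.mod_eq_of_lt h]

lemma digit_fun_unique {b : ℕ} (hb : 2 ≤ b) :
    ∀ (N : ℕ) (u v : ℕ → ℕ), (∀ i, u i < b) → (∀ i, v i < b) →
      (∑ i ∈ range N, b ^ i * u i) = (∑ i ∈ range N, b ^ i * v i) →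
      ∀ i < N, u i = v i := by
  intro N
  induction N with
  | zero => intro u v _ _ _ i hi; omega
  | succ N ih =>
    intro u v hu hv hsum i hi
    have e : ∀ w : ℕ → ℕ, ∑ i ∈ range (N+1), b ^ i * w i
        = b * (∑ i ∈ range N, b ^ i * w (i+1)) + w 0 := by
      intro w
      rw [Finset.sum_range_succ' (fun i => b ^ i * w i) N, Finset.mul_sum]
      congr 1
      · exact Finset.sum_congr rfl fun j _ => by ring
      · simp
    rw [e u, e v] at hsum
    have h0 : u 0 = v 0 := by
      have h1 : (b * (∑ i ∈ range N, b ^ i * u (i+1)) + u 0) % b = u 0 := by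
        rw [Nat.mul_add_mod, Nat.mod_eq_of_lt (hu 0)]
      have h2 : (b * (∑ i ∈ range N, b ^ i * v (i+1)) + v 0) % b = v 0 := by
        rw [Nat.mul_add_mod, Nat.mod_eq_of_lt (hv 0)]
      rw [← h1, ← h2, hsum]
    have htail : (∑ i ∈ range N, b ^ i * u (i+1)) = (∑ i ∈ range N, b ^ i * v (i+1)) := by
      refine Nat.eq_of_mul_eq_mul_left (by omega : 0 < b) ?_
      omega
    rcases i with _ | j
    · exact h0
    · exact ih (fun i => u (i+1)) (fun i => v (i+1)) (fun i => hu _) (fun i => hv _) htail j (by omega)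

lemma digits_eq {b : ℕ} (hb : 2 ≤ b) (u : ℕ → ℕ) (hu : ∀ i, u i < b)
    (m N : ℕ) (hN : ∀ i, N ≤ i → u i = 0)
    (hm : ∑ i ∈ range N, b ^ i * u i = m) : ∀ i, u i = dig b m i := by
  intro i
  set M := N + m + i + 1 with hM
  have hmM : m < b ^ M := by
    have h1 : M < 2 ^ M := Nat.lt_two_pow_self (n := M)
    have h2 : (2:ℕ) ^ M ≤ b ^ M := Nat.pow_le_pow_left hb M
    omega
  have hsum : ∑ j ∈ range M, b ^ j * u j = m := by
    rw [← hm]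
    symm
    apply Finset.sum_subset (Finset.range_subset_range.mpr (by omega))
    intro j _ hj
    rw [hN j (by simp at hj ⊢; omega)]; ring
  exact digit_fun_unique hb M u (dig b m) hu (fun i => dig_lt hb m i)
    (by rw [hsum, sum_dig_eq hmM]) i (by omega)

/-! ### Combining families -/

noncomputable def combine (b : ℕ) (F : ℕ →₀ ℕ) (G : ℕ → (ℕ →₀ ℕ)) : ℕ →₀ ℕ :=
  ∑ i ∈ F.support, b ^ i • G i

lemma combine_apply (b : ℕ) (F : ℕ →₀ ℕ) (G : ℕ → (ℕ →₀ ℕ)) (a : ℕ) :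
    (combine b F G) a = ∑ i ∈ F.support, b ^ i * G i a := by
  rw [combine, Finsupp.finset_sum_apply]
  exact Finset.sum_congr rfl fun i _ => by rw [Finsupp.smul_apply, smul_eq_mul]

lemma wgt_combine (b : ℕ) (F : ℕ →₀ ℕ) (G : ℕ → (ℕ →₀ ℕ)) :
    wgt (combine b F G) = ∑ i ∈ F.support, b ^ i * wgt (G i) := by
  rw [combine, wgt_finset_sum]
  exact Finset.sum_congr rfl fun i _ => wgt_smul _ _

lemma combine_digits {b : ℕ} (hb : 2 ≤ b) (F : ℕ →₀ ℕ) (G : ℕ → ℕ →₀ ℕ)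
    (hGb : ∀ i a, G i a < b) (hG0 : ∀ i, i ∉ F.support → G i = 0) (a : ℕ) :
    ∀ i, G i a = dig b ((combine b F G) a) i := by
  set N := F.support.sup id + 1 with hN
  have hsub : F.support ⊆ range N := by
    intro i hi
    simp only [Finset.mem_range, hN]
    have := Finset.le_sup (f := id) hi
    simp only [id] at this
    omega
  refine digits_eq hb (fun i => G i a) (fun i => hGb i a) _ N ?_ ?_
  · intro i hi
    show (G i) a = 0
    rw [hG0 i (fun hmem => by have := Finset.mem_range.mp (hsub hmem); omega)]
    rfl
  · rw [combine_apply]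
    symm
    apply Finset.sum_subset hsub
    intro j _ hj
    rw [hG0 j hj]
    simp

/-! ### Partitions as finsupps -/

lemma sum_toMultiset (f : ℕ →₀ ℕ) : (Finsupp.toMultiset f).sum = wgt f := by
  rw [Finsupp.toMultiset_apply, wgt, Finsupp.sum, Finsupp.sum, Multiset.sum_sum]
  exact Finset.sum_congr rfl fun a _ => by simp [Multiset.sum_nsmul, mul_comm]

lemma wgt_toFinsupp (s : Multiset ℕ) : wgt (Multiset.toFinsupp s) = s.sum := by
  conv_rhs => rw [← Multiset.toFinsupp_toMultiset s, sum_toMultiset]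

/-- Finsupp version of unrestricted partitions. -/
abbrev PF (A : Set ℕ) (n : ℕ) : Type :=
  {f : ℕ →₀ ℕ // (∀ a ∈ f.support, a ∈ A) ∧ wgt f = n}

/-- Finsupp version of restricted partitions. -/
abbrev PFres (A : Set ℕ) (α : ℕ) (n : ℕ) : Type :=
  {f : ℕ →₀ ℕ // (∀ a ∈ f.support, a ∈ A) ∧ (∀ a, f a ≤ α) ∧ wgt f = n}

variable {A : Set ℕ}

noncomputable def equivPF (hA : ∀ a ∈ A, 0 < a) (n : ℕ) :
    {p : n.Partition // ∀ a ∈ p.parts, a ∈ A} ≃ PF A n where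
  toFun p := ⟨Multiset.toFinsupp p.1.parts,
    fun a ha => p.2 a (by simpa [Multiset.toFinsupp_support] using ha),
    by rw [wgt_toFinsupp, p.1.parts_sum]⟩
  invFun f := ⟨⟨Finsupp.toMultiset f.1,
      fun {a} ha => hA a (f.2.1 a ((Finsupp.mem_toMultiset _ _).mp ha)),
      by rw [sum_toMultiset]; exact f.2.2⟩,
    fun a ha => f.2.1 a ((Finsupp.mem_toMultiset _ _).mp ha)⟩
  left_inv p := by
    apply Subtype.ext; apply Nat.Partition.ext
    exact Multiset.toFinsupp_toMultiset _
  right_inv f := by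
    apply Subtype.ext
    exact Finsupp.toMultiset_toFinsupp _

noncomputable def equivPFres (hA : ∀ a ∈ A, 0 < a) (α n : ℕ) :
    {p : n.Partition // (∀ a ∈ p.parts, a ∈ A) ∧ ∀ a, p.parts.count a ≤ α} ≃ PFres A α n where
  toFun p := ⟨Multiset.toFinsupp p.1.parts,
    fun a ha => p.2.1 a (by simpa [Multiset.toFinsupp_support] using ha),
    fun a => by rw [Multiset.toFinsupp_apply]; exact p.2.2 a,
    by rw [wgt_toFinsupp, p.1.parts_sum]⟩
  invFun f := ⟨⟨Finsupp.toMultiset f.1,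
      fun {a} ha => hA a (f.2.1 a ((Finsupp.mem_toMultiset _ _).mp ha)),
      by rw [sum_toMultiset]; exact f.2.2.2⟩,
    fun a ha => f.2.1 a ((Finsupp.mem_toMultiset _ _).mp ha),
    fun a => by rw [Finsupp.count_toMultiset]; exact f.2.2.1 a⟩
  left_inv p := by
    apply Subtype.ext; apply Nat.Partition.ext
    exact Multiset.toFinsupp_toMultiset _
  right_inv f := by
    apply Subtype.ext
    exact Finsupp.toMultiset_toFinsupp _

lemma pA_eq (hA : ∀ a ∈ A, 0 < a) (n : ℕ) : pA A n = Nat.card (PF A n) :=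
  Nat.card_congr (equivPF hA n)

lemma pAres_eq (hA : ∀ a ∈ A, 0 < a) (α n : ℕ) : pAres A α n = Nat.card (PFres A α n) :=
  Nat.card_congr (equivPFres hA α n)

lemma finite_PF (hA : ∀ a ∈ A, 0 < a) (n : ℕ) : Finite (PF A n) :=
  Finite.of_equiv _ (equivPF hA n)

lemma finite_PFres (hA : ∀ a ∈ A, 0 < a) (α n : ℕ) : Finite (PFres A α n) :=
  Finite.of_equiv _ (equivPFres hA α n)

lemma pAres_zero (A : Set ℕ) (α : ℕ) : pAres A α 0 = 1 := by
  unfold pAres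
  have h : ∀ p : (0 : ℕ).Partition, (∀ a ∈ p.parts, a ∈ A) ∧ ∀ a, p.parts.count a ≤ α := by
    intro p
    constructor
    · intro a ha; simp [Nat.Partition.partition_zero_parts] at ha
    · intro a; simp [Nat.Partition.partition_zero_parts]
  haveI : Unique {p : (0:ℕ).Partition // (∀ a ∈ p.parts, a ∈ A) ∧ ∀ a, p.parts.count a ≤ α} :=
    ⟨⟨⟨default, h _⟩⟩, fun q => Subtype.ext (Subsingleton.elim _ _)⟩
  exact Nat.card_unique

/-! ### Finiteness of the index set -/

lemma Sfinite (α n : ℕ) (hα : 1 ≤ α) :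
    {F : ℕ →₀ ℕ | (F.sum fun i N => (α + 1) ^ i * N) = n}.Finite := by
  set S := {F : ℕ →₀ ℕ | (F.sum fun i N => (α + 1) ^ i * N) = n} with hS
  have key : ∀ F ∈ S, ∀ i : ℕ, (α + 1) ^ i * F i ≤ n := by
    intro F hF i
    by_cases h : i ∈ F.support
    · calc (α + 1) ^ i * F i
          ≤ F.sum fun i N => (α + 1) ^ i * N :=
            Finset.single_le_sum (f := fun i => (α + 1) ^ i * F i) (fun j _ => Nat.zero_le _) h
        _ = n := hF
    · simp [Finsupp.notMem_support_iff.mp h]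
  have hle : ∀ F ∈ S, ∀ i, F i ≤ n := by
    intro F hF i
    have h1 := key F hF i
    have h2 : 1 ≤ (α + 1) ^ i := Nat.one_le_pow _ _ (by omega)
    calc F i = 1 * F i := (one_mul _).symm
      _ ≤ (α + 1) ^ i * F i := Nat.mul_le_mul_right _ h2
      _ ≤ n := h1
  have hzero : ∀ F ∈ S, ∀ i, n ≤ i → F i = 0 := by
    intro F hF i hi
    by_contra h
    have h1 := key F hF i
    have h2 : (α + 1) ^ i ≤ (α + 1) ^ i * F i := by
      have : 1 ≤ F i := by omega
      calc (α + 1) ^ i = (α + 1) ^ i * 1 := (mul_one _).symm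
        _ ≤ (α + 1) ^ i * F i := Nat.mul_le_mul_left _ this
    have h3 : i < 2 ^ i := Nat.lt_two_pow_self (n := i)
    have h4 : (2:ℕ) ^ i ≤ (α + 1) ^ i := Nat.pow_le_pow_left (by omega) i
    omega
  haveI : Finite ↥S := by
    refine Finite.of_injective (fun F : ↥S => fun i : Fin n => (⟨F.1 i.1, ?_⟩ : Fin (n+1))) ?_
    · exact Nat.lt_succ_of_le (hle F.1 F.2 i.1)
    · intro F G h
      apply Subtype.ext
      ext i
      by_cases hi : i < n
      · have := congr_fun h ⟨i, hi⟩
        simpa using this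
      · rw [hzero F.1 F.2 i (by omega), hzero G.1 G.2 i (by omega)]
  exact S.toFinite

lemma nat_card_sigma {ι : Type} [Fintype ι] (β : ι → Type) [∀ i, Finite (β i)] :
    Nat.card (Σ i, β i) = ∑ i, Nat.card (β i) := by
  letI : ∀ i, Fintype (β i) := fun i => Fintype.ofFinite _
  simp only [Nat.card_eq_fintype_card, Fintype.card_sigma]

/-! ### The main bijection -/

variable {α n : ℕ} {T : Finset (ℕ →₀ ℕ)}

/-- the extended family of a sigma element -/
noncomputable def Gfun (A : Set ℕ) (α : ℕ) {T : Finset (ℕ →₀ ℕ)}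
    (x : Σ F : {x // x ∈ T}, ∀ i : {y : ℕ // y ∈ (F.1).support}, PFres A α (F.1 i.1)) :
    ℕ → ℕ →₀ ℕ :=
  fun i => if h : i ∈ (x.1.1).support then (x.2 ⟨i, h⟩).1 else 0

lemma Gfun_lt
    (x : Σ F : {x // x ∈ T}, ∀ i : {y : ℕ // y ∈ (F.1).support}, PFres A α (F.1 i.1))
    (i a : ℕ) : Gfun A α x i a < α + 1 := by
  unfold Gfun
  split
  · exact Nat.lt_succ_of_le ((x.2 _).2.2.1 a)
  · simp

lemma Gfun_zero
    (x : Σ F : {x // x ∈ T}, ∀ i : {y : ℕ // y ∈ (F.1).support}, PFres A α (F.1 i.1))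
    {i : ℕ} (h : i ∉ (x.1.1).support) : Gfun A α x i = 0 := dif_neg h

lemma Gfun_supp
    (x : Σ F : {x // x ∈ T}, ∀ i : {y : ℕ // y ∈ (F.1).support}, PFres A α (F.1 i.1))
    (i : ℕ) : ∀ a ∈ (Gfun A α x i).support, a ∈ A := by
  unfold Gfun
  split
  · exact (x.2 _).2.1
  · simp

lemma wgt_Gfun
    (x : Σ F : {x // x ∈ T}, ∀ i : {y : ℕ // y ∈ (F.1).support}, PFres A α (F.1 i.1))
    (i : ℕ) : wgt (Gfun A α x i) = x.1.1 i := by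
  unfold Gfun
  split
  · exact (x.2 _).2.2.2
  · rename_i h
    rw [wgt_zero]
    exact (Finsupp.notMem_support_iff.mp h).symm

lemma Gfun_mem
    (x : Σ F : {x // x ∈ T}, ∀ i : {y : ℕ // y ∈ (F.1).support}, PFres A α (F.1 i.1))
    {i : ℕ} (h : i ∈ (x.1.1).support) : Gfun A α x i = (x.2 ⟨i, h⟩).1 := dif_pos h

lemma PhiFun_supp
    (x : Σ F : {x // x ∈ T}, ∀ i : {y : ℕ // y ∈ (F.1).support}, PFres A α (F.1 i.1)) :
    ∀ a ∈ (combine (α+1) x.1.1 (Gfun A α x)).support, a ∈ A := by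
  intro a ha
  rw [Finsupp.mem_support_iff, combine_apply] at ha
  obtain ⟨i, hi, hne⟩ := Finset.exists_ne_zero_of_sum_ne_zero ha
  have h1 : Gfun A α x i a ≠ 0 := fun h => hne (by rw [h, mul_zero])
  exact Gfun_supp x i a (Finsupp.mem_support_iff.mpr h1)

lemma PhiFun_wgt
    (hT : ∀ F : ℕ →₀ ℕ, F ∈ T ↔ (F.sum fun i N => (α + 1) ^ i * N) = n)
    (x : Σ F : {x // x ∈ T}, ∀ i : {y : ℕ // y ∈ (F.1).support}, PFres A α (F.1 i.1)) :
    wgt (combine (α+1) x.1.1 (Gfun A α x)) = n := by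
  rw [wgt_combine]
  have : ∑ i ∈ (x.1.1).support, (α+1) ^ i * wgt (Gfun A α x i)
      = ∑ i ∈ (x.1.1).support, (α+1) ^ i * x.1.1 i :=
    Finset.sum_congr rfl fun i _ => by rw [wgt_Gfun]
  rw [this]
  exact (hT x.1.1).mp x.1.2

theorem main_card (hA : ∀ a ∈ A, 0 < a) (hα : 1 ≤ α) (hn : 1 ≤ n)
    (T : Finset (ℕ →₀ ℕ))
    (hT : ∀ F : ℕ →₀ ℕ, F ∈ T ↔ (F.sum fun i N => (α + 1) ^ i * N) = n) :
    Nat.card (Σ F : {x // x ∈ T}, ∀ i : {y : ℕ // y ∈ (F.1).support}, PFres A α (F.1 i.1))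
      = Nat.card (PF A n) := by
  have hb2 : 2 ≤ α + 1 := by omega
  refine Nat.card_eq_of_bijective
    (fun x => ⟨combine (α+1) x.1.1 (Gfun A α x), PhiFun_supp x, PhiFun_wgt hT x⟩) ⟨?_, ?_⟩
  · -- injectivity
    intro x y hxy
    have hfe : combine (α+1) x.1.1 (Gfun A α x) = combine (α+1) y.1.1 (Gfun A α y) :=
      congrArg Subtype.val hxy
    have hdx := combine_digits hb2 x.1.1 (Gfun A α x) (fun i a => Gfun_lt x i a)
      (fun i h => Gfun_zero x h)
    have hdy := combine_digits hb2 y.1.1 (Gfun A α y) (fun i a => Gfun_lt y i a)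
      (fun i h => Gfun_zero y h)
    have hG : Gfun A α x = Gfun A α y := by
      funext i
      ext a
      rw [hdx a i, hdy a i, hfe]
    have hF : x.1.1 = y.1.1 := by
      ext i
      rw [← wgt_Gfun x i, ← wgt_Gfun y i, hG]
    obtain ⟨⟨F1, hm1⟩, g1⟩ := x
    obtain ⟨⟨F2, hm2⟩, g2⟩ := y
    dsimp only at hF hG
    subst hF
    have hg : g1 = g2 := by
      funext i
      apply Subtype.ext
      have h1 := (Gfun_mem (T := T) ⟨⟨F1, hm1⟩, g1⟩ (i := i.1) i.2).symm
      have h2 := Gfun_mem (T := T) ⟨⟨F1, hm2⟩, g2⟩ (i := i.1) i.2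
      calc (g1 i).1 = Gfun A α ⟨⟨F1, hm1⟩, g1⟩ i.1 := h1
        _ = Gfun A α ⟨⟨F1, hm2⟩, g2⟩ i.1 := by rw [hG]
        _ = (g2 i).1 := h2
    subst hg
    rfl
  · -- surjectivity
    rintro ⟨f, hfA, hfw⟩
    have hfa_lt : ∀ a, f a < (α + 1) ^ n := by
      intro a
      have hle : f a ≤ n := by
        by_cases h : a ∈ f.support
        · have h1 : 0 < a := hA a (hfA a h)
          have h2 := mul_le_wgt f a
          rw [hfw] at h2
          calc f a = 1 * f a := (one_mul _).symm
            _ ≤ a * f a := Nat.mul_le_mul_right _ h1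
            _ ≤ n := h2
        · rw [Finsupp.notMem_support_iff.mp h]; omega
      have h3 : n < 2 ^ n := Nat.lt_two_pow_self (n := n)
      have h4 : (2:ℕ) ^ n ≤ (α + 1) ^ n := Nat.pow_le_pow_left (by omega) n
      omega
    set Gi : ℕ → ℕ →₀ ℕ := fun i => Finsupp.onFinset f.support
      (fun a => dig (α+1) (f a) i)
      (fun a h => Finsupp.mem_support_iff.mpr
        (fun h0 => h (by show dig (α+1) (f a) i = 0; rw [h0]; simp [dig]))) with hGidef
    have hGi_apply : ∀ i a, Gi i a = dig (α+1) (f a) i := fun i a => rfl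
    have hGi_zero_of : ∀ i, n ≤ i → Gi i = 0 := by
      intro i hi
      ext a
      rw [hGi_apply]
      have : f a < (α+1) ^ i :=
        lt_of_lt_of_le (hfa_lt a) (Nat.pow_le_pow_right (by omega) hi)
      rw [dig_eq_zero this]
      rfl
    set F : ℕ →₀ ℕ := Finsupp.onFinset (range n) (fun i => wgt (Gi i))
      (fun i h => Finset.mem_range.mpr (by
        by_contra hc
        exact h (by show wgt (Gi i) = 0; rw [hGi_zero_of i (by omega), wgt_zero]))) with hFdef
    have hF_apply : ∀ i, F i = wgt (Gi i) := fun i => rfl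
    have hFsupp : F.support ⊆ range n := Finsupp.support_onFinset_subset
    have hGsupp : ∀ i, (Gi i).support ⊆ f.support := fun i => Finsupp.support_onFinset_subset
    have hGiA : ∀ i, ∀ a ∈ (Gi i).support, a ∈ A := fun i a ha => hfA a (hGsupp i ha)
    have hGi_zero : ∀ i, i ∉ F.support → Gi i = 0 := by
      intro i hi
      refine eq_zero_of_wgt_eq_zero hA (hGiA i) ?_
      rw [← hF_apply]
      exact Finsupp.notMem_support_iff.mp hi
    have hFsum : (F.sum fun i N => (α + 1) ^ i * N) = n := by
      rw [Finsupp.sum]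
      rw [Finset.sum_subset hFsupp (fun i _ hi => by
        rw [Finsupp.notMem_support_iff.mp hi, mul_zero])]
      have e1 : ∀ i ∈ range n, (α+1) ^ i * F i
          = ∑ a ∈ f.support, a * ((α+1) ^ i * Gi i a) := by
        intro i _
        rw [hF_apply, wgt_sum_eq (Gi i) (hGsupp i), Finset.mul_sum]
        exact Finset.sum_congr rfl fun a _ => by ring
      rw [Finset.sum_congr rfl e1, Finset.sum_comm]
      have e2 : ∀ a ∈ f.support, ∑ i ∈ range n, a * ((α+1) ^ i * Gi i a) = a * f a := by
        intro a _
        rw [← Finset.mul_sum]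
        congr 1
        have : ∀ i, Gi i a = dig (α+1) (f a) i := fun i => hGi_apply i a
        rw [Finset.sum_congr rfl fun i _ => by rw [this i]]
        exact sum_dig_eq (hfa_lt a)
      rw [Finset.sum_congr rfl e2]
      rw [← wgt_sum_eq f (Finset.Subset.refl f.support)]
      exact hfw
    refine ⟨⟨⟨F, (hT F).mpr hFsum⟩,
      fun i => ⟨Gi i.1, hGiA i.1,
        fun a => Nat.lt_succ_iff.mp (by rw [hGi_apply]; exact dig_lt hb2 _ _),
        (hF_apply i.1).symm⟩⟩, ?_⟩
    apply Subtype.ext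
    show combine (α+1) F (Gfun A α _) = f
    have hGfun : ∀ i ∈ F.support,
        Gfun A α (⟨⟨F, (hT F).mpr hFsum⟩,
          fun i => ⟨Gi i.1, hGiA i.1,
            fun a => Nat.lt_succ_iff.mp (by rw [hGi_apply]; exact dig_lt hb2 _ _),
            (hF_apply i.1).symm⟩⟩ :
          Σ F : {x // x ∈ T}, ∀ i : {y : ℕ // y ∈ (F.1).support}, PFres A α (F.1 i.1)) i
          = Gi i := by
      intro i hi
      rw [Gfun_mem _ hi]
    rw [combine, Finset.sum_congr rfl fun i hi => by rw [hGfun i hi]]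
    ext a
    rw [Finsupp.finset_sum_apply]
    have e3 : ∀ i ∈ F.support, ((α+1) ^ i • Gi i) a = (α+1) ^ i * Gi i a :=
      fun i _ => by rw [Finsupp.smul_apply, smul_eq_mul]
    rw [Finset.sum_congr rfl e3]
    rw [Finset.sum_subset hFsupp (fun i _ hi => by rw [hGi_zero i hi]; simp)]
    rw [Finset.sum_congr rfl fun i _ => by rw [hGi_apply]]
    exact sum_dig_eq (hfa_lt a)

end Stmt4Aux

open Stmt4Aux in
theorem stmt_4 (A : Set ℕ) (hA : ∀ a ∈ A, 0 < a) (α : ℕ) (hα : 1 ≤ α)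
    (n : ℕ) (hn : 1 ≤ n) :
    pA A n =
      ∑ᶠ (f : ℕ →₀ ℕ) (_ : (f.sum fun i N => (α + 1) ^ i * N) = n),
        ∏ᶠ i : ℕ, pAres A α (f i) := by
  classical
  letI : ∀ m : ℕ, Finite (PFres A α m) := fun m => finite_PFres hA α m
  have hfin := Sfinite α n hα
  set T := hfin.toFinset with hTdef
  have hT : ∀ F : ℕ →₀ ℕ, F ∈ T ↔ (F.sum fun i N => (α + 1) ^ i * N) = n := by
    intro F; rw [hTdef, Set.Finite.mem_toFinset]; rfl
  have h1 : (∑ᶠ (f : ℕ →₀ ℕ) (_ : (f.sum fun i N => (α + 1) ^ i * N) = n),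
      ∏ᶠ i : ℕ, pAres A α (f i)) = ∑ F ∈ T, ∏ᶠ i : ℕ, pAres A α (F i) :=
    finsum_mem_eq_finite_toFinset_sum _ hfin
  have h2 : ∀ F : ℕ →₀ ℕ, (∏ᶠ i : ℕ, pAres A α (F i))
      = ∏ i ∈ F.support, Nat.card (PFres A α (F i)) := by
    intro F
    rw [finprod_eq_prod_of_mulSupport_subset (s := F.support)]
    · exact Finset.prod_congr rfl fun i _ => pAres_eq hA α (F i)
    · intro i hi
      simp only [Function.mem_mulSupport] at hi
      by_contra h
      exact hi (by rw [Finsupp.notMem_support_iff.mp (by simpa using h), pAres_zero])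
  have h3 : ∀ F : ℕ →₀ ℕ, (∏ i ∈ F.support, Nat.card (PFres A α (F i)))
      = Nat.card (∀ i : {y : ℕ // y ∈ F.support}, PFres A α (F i.1)) := by
    intro F
    rw [Nat.card_pi]
    exact (Finset.prod_coe_sort F.support (fun i => Nat.card (PFres A α (F i)))).symm
  have h4 : (∑ F ∈ T, Nat.card (∀ i : {y : ℕ // y ∈ F.support}, PFres A α (F i.1)))
      = Nat.card (Σ F : {x // x ∈ T}, ∀ i : {y : ℕ // y ∈ (F.1).support}, PFres A α (F.1 i.1)) := by
    rw [nat_card_sigma]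
    exact (Finset.sum_coe_sort T
      (fun F => Nat.card (∀ i : {y : ℕ // y ∈ F.support}, PFres A α (F i.1)))).symm
  rw [h1]
  rw [Finset.sum_congr rfl fun F _ => (h2 F).trans (h3 F), h4,
    main_card hA hα hn T hT, pA_eq hA n]
end

section
/- Let A be a set of positive integers, p^A(n) the number of partitions of n into parts from A, and d^A(n) = p^A_1(n) the number of partitions of n into distinct parts from A. Then for every n ≥ 1, p^A(n) = ∑ over all nonnegative integer solutions (N_0, N_1, N_2, ...) of n = ∑_{i≥0} 2^i N_i of the product ∏_{i≥0} d^A(N_i). -/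
open Finset

/-- Number of partitions of `n` into distinct parts from `A`. -/
noncomputable def dA (A : Set ℕ) (n : ℕ) : ℕ :=
  Nat.card {p : n.Partition // (∀ a ∈ p.parts, a ∈ A) ∧ p.parts.Nodup}

lemma dA_zero (A : Set ℕ) : dA A 0 = 1 := by
  have hp : ∀ p : Nat.Partition 0, p.parts = 0 := by
    intro p
    by_contra h
    obtain ⟨a, ha⟩ := Multiset.exists_mem_of_ne_zero h
    have h1 : a ≤ p.parts.sum := Multiset.single_le_sum (fun x _ => Nat.zero_le x) a ha
    rw [p.parts_sum] at h1
    exact absurd (Nat.le_zero.mp h1) (p.parts_pos ha).ne'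
  rw [dA, Nat.card_eq_one_iff_unique]
  refine ⟨⟨fun a b => ?_⟩, ⟨⟨⟨0, by simp, by simp⟩, by simp⟩⟩⟩
  ext1; ext1; rw [hp, hp]

/-- distinct partitions counted as finsets -/
def dAEquiv (A : Set ℕ) (hA : ∀ a ∈ A, 0 < a) (N : ℕ) :
    {p : N.Partition // (∀ a ∈ p.parts, a ∈ A) ∧ p.parts.Nodup} ≃
      {s : Finset ℕ // (∀ a ∈ s, a ∈ A) ∧ ∑ a ∈ s, a = N} where
  toFun p := ⟨⟨p.1.parts, p.2.2⟩, fun a ha => p.2.1 a ha, by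
    show (Multiset.map id p.1.parts).sum = N
    rw [Multiset.map_id]; exact p.1.parts_sum⟩
  invFun s := ⟨⟨s.1.1, fun {a} ha => hA a (s.2.1 a ha), by
    have := s.2.2
    show s.1.1.sum = N
    rwa [show ∑ a ∈ s.1, a = s.1.1.sum by
      show (Multiset.map id s.1.1).sum = _; rw [Multiset.map_id]] at this⟩,
    s.2.1, s.1.2⟩
  left_inv p := rfl
  right_inv s := rfl

lemma dA_card (A : Set ℕ) (hA : ∀ a ∈ A, 0 < a) (N : ℕ) :
    dA A N = Nat.card {s : Finset ℕ // (∀ a ∈ s, a ∈ A) ∧ ∑ a ∈ s, a = N} :=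
  Nat.card_congr (dAEquiv A hA N)


/-- the master object: finsets of (part, level) pairs -/
def Xp (A : Set ℕ) (n : ℕ) : Type :=
  {R : Finset (ℕ × ℕ) // (∀ q ∈ R, q.1 ∈ A) ∧ ∑ q ∈ R, q.1 * 2 ^ q.2 = n}

/-- encoding of a partition -/
def enc (p : Multiset ℕ) : Finset (ℕ × ℕ) :=
  p.toFinset.biUnion fun a => (p.count a).bitIndices.toFinset.image fun i => (a, i)

lemma mem_enc {p : Multiset ℕ} {q : ℕ × ℕ} :
    q ∈ enc p ↔ q.2 ∈ (p.count q.1).bitIndices.toFinset := by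
  simp only [enc, mem_biUnion, Multiset.mem_toFinset, mem_image, List.mem_toFinset]
  constructor
  · rintro ⟨a, ha, i, hi, rfl⟩
    exact hi
  · intro h
    refine ⟨q.1, ?_, q.2, h, rfl⟩
    rw [← Multiset.count_pos]
    refine Nat.pos_of_ne_zero fun h0 => ?_
    rw [h0] at h
    simp at h

lemma enc_sum (p : Multiset ℕ) : ∑ q ∈ enc p, q.1 * 2 ^ q.2 = p.sum := by
  rw [enc, Finset.sum_biUnion]
  · have h1 : ∀ a ∈ p.toFinset,
        (∑ q ∈ (p.count a).bitIndices.toFinset.image (fun i => (a, i)), q.1 * 2 ^ q.2)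
          = a * p.count a := by
      intro a _
      rw [Finset.sum_image (by intro x _ y _ h; exact (Prod.mk.injEq _ _ _ _ ▸ h).2)]
      simp only []
      rw [← Finset.mul_sum]
      congr 1
      exact Finset.twoPowSum_toFinset_bitIndices _
    rw [Finset.sum_congr rfl h1]
    conv_rhs => rw [← Multiset.toFinset_sum_count_nsmul_eq p]
    rw [Multiset.sum_sum]
    refine Finset.sum_congr rfl fun a _ => ?_
    rw [Multiset.nsmul_singleton, Multiset.sum_replicate, smul_eq_mul, mul_comm]
  · intro a _ b _ hab
    simp only [Function.onFun]
    rw [Finset.disjoint_left]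
    rintro ⟨x, i⟩ hx hy
    simp only [mem_image] at hx hy
    obtain ⟨_, _, h1⟩ := hx
    obtain ⟨_, _, h2⟩ := hy
    cases h1; cases h2; exact hab rfl

/-- decoding: a multiset from a finset of pairs -/
def dec (R : Finset (ℕ × ℕ)) : Multiset ℕ := ∑ q ∈ R, (2 ^ q.2) • ({q.1} : Multiset ℕ)

lemma count_dec (R : Finset (ℕ × ℕ)) (a : ℕ) :
    (dec R).count a = ∑ q ∈ R.filter (fun q => q.1 = a), 2 ^ q.2 := by
  rw [dec, Multiset.count_sum', Finset.sum_filter]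
  refine Finset.sum_congr rfl fun q _ => ?_
  rw [Multiset.nsmul_singleton, Multiset.count_replicate]

lemma mem_dec {R : Finset (ℕ × ℕ)} {a : ℕ} : a ∈ dec R ↔ ∃ q ∈ R, q.1 = a := by
  simp only [dec, Multiset.mem_sum]
  constructor
  · rintro ⟨q, hq, ha⟩
    rw [Multiset.nsmul_singleton, Multiset.mem_replicate] at ha
    exact ⟨q, hq, ha.2.symm⟩
  · rintro ⟨q, hq, rfl⟩
    exact ⟨q, hq, by rw [Multiset.nsmul_singleton, Multiset.mem_replicate]; exact ⟨by positivity, rfl⟩⟩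

lemma dec_sum (R : Finset (ℕ × ℕ)) : (dec R).sum = ∑ q ∈ R, q.1 * 2 ^ q.2 := by
  rw [dec, Multiset.sum_sum]
  refine Finset.sum_congr rfl fun q _ => ?_
  rw [Multiset.nsmul_singleton, Multiset.sum_replicate, smul_eq_mul, mul_comm]

lemma dec_enc (p : Multiset ℕ) : dec (enc p) = p := by
  ext a
  rw [count_dec]
  have hfil : (enc p).filter (fun q => q.1 = a)
      = (p.count a).bitIndices.toFinset.image (fun i => (a, i)) := by
    ext ⟨b, i⟩
    simp only [mem_filter, mem_enc, mem_image]
    constructor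
    · rintro ⟨h1, rfl⟩
      exact ⟨i, h1, rfl⟩
    · rintro ⟨j, hj, h⟩
      obtain ⟨rfl, rfl⟩ := Prod.mk.injEq .. ▸ h
      exact ⟨hj, rfl⟩
  rw [hfil, Finset.sum_image (by intro x _ y _ h; exact (Prod.mk.injEq _ _ _ _ ▸ h).2)]
  exact Finset.twoPowSum_toFinset_bitIndices _

lemma enc_dec (R : Finset (ℕ × ℕ)) : enc (dec R) = R := by
  ext ⟨a, i⟩
  rw [mem_enc]
  have hc : (dec R).count a = ∑ j ∈ (R.filter (fun q => q.1 = a)).image Prod.snd, 2 ^ j := by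
    rw [count_dec, Finset.sum_image]
    intro x hx y hy h
    rw [mem_coe, mem_filter] at hx hy
    exact Prod.ext (hx.2.trans hy.2.symm) h
  rw [hc, Finset.toFinset_bitIndices_twoPowSum]
  simp only [mem_image, mem_filter]
  constructor
  · rintro ⟨⟨b, j⟩, ⟨hR, rfl⟩, rfl⟩
    exact hR
  · intro h
    exact ⟨(a, i), ⟨h, rfl⟩, rfl⟩

/-- partitions with parts in A are equivalent to the master object -/
noncomputable def partEquiv (A : Set ℕ) (hA : ∀ a ∈ A, 0 < a) (n : ℕ) :
    {p : n.Partition // ∀ a ∈ p.parts, a ∈ A} ≃ Xp A n where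
  toFun p := ⟨enc p.1.parts, by
      rintro ⟨a, i⟩ hq
      rw [mem_enc] at hq
      refine p.2 a ?_
      rw [← Multiset.count_pos]
      refine Nat.pos_of_ne_zero fun h0 => ?_
      rw [h0] at hq; simp at hq,
    by rw [enc_sum, p.1.parts_sum]⟩
  invFun R := ⟨⟨dec R.1, fun {a} ha => by
      obtain ⟨q, hq, rfl⟩ := mem_dec.mp ha
      exact hA _ (R.2.1 q hq),
    by rw [dec_sum, R.2.2]⟩,
    fun a ha => by
      obtain ⟨q, hq, rfl⟩ := mem_dec.mp ha
      exact R.2.1 q hq⟩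
  left_inv p := Subtype.ext (Nat.Partition.ext (dec_enc p.1.parts))
  right_inv R := Subtype.ext (enc_dec R.1)

/-- the parts at level i -/
def sA (R : Finset (ℕ × ℕ)) (i : ℕ) : Finset ℕ := (R.filter (fun q => q.2 = i)).image Prod.fst

lemma mem_sA {R : Finset (ℕ × ℕ)} {i a : ℕ} : a ∈ sA R i ↔ (a, i) ∈ R := by
  simp only [sA, mem_image, mem_filter]
  constructor
  · rintro ⟨⟨b, j⟩, ⟨hR, rfl⟩, rfl⟩
    exact hR
  · intro h
    exact ⟨(a, i), ⟨h, rfl⟩, rfl⟩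

/-- the level-sum function -/
noncomputable def FF (R : Finset (ℕ × ℕ)) : ℕ →₀ ℕ :=
  Finsupp.onFinset (R.image Prod.snd) (fun i => ∑ a ∈ sA R i, a) (by
    intro i hi
    by_contra h
    have hemp : sA R i = ∅ := by
      rw [Finset.eq_empty_iff_forall_notMem]
      intro a ha
      exact h (Finset.mem_image_of_mem Prod.snd (mem_sA.mp ha))
    exact hi (show (∑ a ∈ sA R i, a) = 0 by rw [hemp]; rfl))

lemma FF_apply (R : Finset (ℕ × ℕ)) (i : ℕ) : FF R i = ∑ a ∈ sA R i, a := rfl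

lemma FF_sum (R : Finset (ℕ × ℕ)) :
    (FF R).sum (fun i N => 2 ^ i * N) = ∑ q ∈ R, q.1 * 2 ^ q.2 := by
  rw [Finsupp.sum]
  have hsub : (FF R).support ⊆ R.image Prod.snd := Finsupp.support_onFinset_subset
  rw [Finset.sum_subset hsub
    (by intro i _ hi
        rw [Finsupp.notMem_support_iff] at hi
        rw [hi, mul_zero])]
  rw [← Finset.sum_fiberwise_of_maps_to (fun q hq => Finset.mem_image_of_mem Prod.snd hq)
    (fun q => q.1 * 2 ^ q.2)]
  refine Finset.sum_congr rfl fun i _ => ?_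
  rw [FF_apply, Finset.mul_sum, sA,
    Finset.sum_image (by
      intro x hx y hy h
      rw [mem_coe, mem_filter] at hx hy
      exact Prod.ext h (hx.2.trans hy.2.symm))]
  refine Finset.sum_congr rfl fun q hq => ?_
  rw [mem_filter] at hq
  rw [hq.2, mul_comm]

lemma FF_pos_mem {A : Set ℕ} (hA : ∀ a ∈ A, 0 < a) {R : Finset (ℕ × ℕ)}
    (hR : ∀ q ∈ R, q.1 ∈ A) {a i : ℕ} (h : (a, i) ∈ R) : FF R i ≠ 0 := by
  have ha : a ∈ sA R i := mem_sA.mpr h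
  have : a ≤ FF R i := Finset.single_le_sum (fun x _ => Nat.zero_le x) ha
  have := hA a (hR _ h)
  omega

/-- build the pair set from level choices -/
def bld (f : ℕ →₀ ℕ) (s : f.support → Finset ℕ) : Finset (ℕ × ℕ) :=
  f.support.attach.biUnion (fun i => (s i).image (fun a => (a, (i : ℕ))))

lemma mem_bld {f : ℕ →₀ ℕ} {s : f.support → Finset ℕ} {q : ℕ × ℕ} :
    q ∈ bld f s ↔ ∃ h : q.2 ∈ f.support, q.1 ∈ s ⟨q.2, h⟩ := by
  simp only [bld, mem_biUnion, mem_attach, mem_image, true_and]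
  constructor
  · rintro ⟨i, a, ha, rfl⟩
    exact ⟨i.2, ha⟩
  · rintro ⟨h, ha⟩
    exact ⟨⟨q.2, h⟩, q.1, ha, rfl⟩

lemma sA_bld {f : ℕ →₀ ℕ} {s : f.support → Finset ℕ} {j : ℕ} (h : j ∈ f.support) :
    sA (bld f s) j = s ⟨j, h⟩ := by
  ext a
  rw [mem_sA, mem_bld]
  exact ⟨fun ⟨h', ha⟩ => ha, fun ha => ⟨h, ha⟩⟩

lemma sA_bld_empty {f : ℕ →₀ ℕ} {s : f.support → Finset ℕ} {j : ℕ} (h : j ∉ f.support) :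
    sA (bld f s) j = ∅ := by
  ext a
  rw [mem_sA, mem_bld]
  simp only [Finset.notMem_empty, iff_false]
  rintro ⟨h', _⟩
  exact h h'

lemma sum_bld {f : ℕ →₀ ℕ} {s : f.support → Finset ℕ}
    (hs : ∀ i, ∑ a ∈ s i, a = f ↑i) :
    ∑ q ∈ bld f s, q.1 * 2 ^ q.2 = f.sum fun i N => 2 ^ i * N := by
  rw [bld, Finset.sum_biUnion (by
    intro i _ j _ hij
    simp only [Function.onFun]
    rw [Finset.disjoint_left]
    rintro ⟨a, k⟩ ha hb
    simp only [mem_image] at ha hb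
    obtain ⟨_, _, h1⟩ := ha
    obtain ⟨_, _, h2⟩ := hb
    have : (i : ℕ) = (j : ℕ) := by
      have e1 := (Prod.mk.injEq _ _ _ _ ▸ h1).2
      have e2 := (Prod.mk.injEq _ _ _ _ ▸ h2).2
      omega
    exact hij (Subtype.ext this))]
  have h1 : ∀ i : {x // x ∈ f.support},
      (∑ q ∈ (s i).image (fun a => (a, (i : ℕ))), q.1 * 2 ^ q.2) = 2 ^ (i : ℕ) * f ↑i := by
    intro i
    rw [Finset.sum_image (by intro x _ y _ h; exact (Prod.mk.injEq _ _ _ _ ▸ h).1)]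
    simp only []
    rw [← Finset.sum_mul, hs i, mul_comm]
  rw [Finset.sum_congr rfl (fun i _ => h1 i), Finsupp.sum, ← Finset.sum_attach f.support]

/-- the fiber of FF over f, as a product of level choices -/
noncomputable def fiberEquiv (A : Set ℕ) (hA : ∀ a ∈ A, 0 < a) (n : ℕ) (f : ℕ →₀ ℕ)
    (hf : (f.sum fun i N => 2 ^ i * N) = n) :
    {R : Xp A n // FF R.1 = f} ≃
      ∀ i : f.support, {s : Finset ℕ // (∀ a ∈ s, a ∈ A) ∧ ∑ a ∈ s, a = f ↑i} where
  toFun R i := ⟨sA R.1.1 i, fun a ha => R.1.2.1 _ (mem_sA.mp ha), by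
    rw [← FF_apply, R.2]⟩
  invFun s :=
    ⟨⟨bld f (fun i => (s i).1),
      by
        rintro q hq
        obtain ⟨h, ha⟩ := mem_bld.mp hq
        exact (s ⟨q.2, h⟩).2.1 _ ha,
      by rw [sum_bld (fun i => (s i).2.2), hf]⟩,
      by
        ext j
        rw [FF_apply]
        by_cases h : j ∈ f.support
        · rw [sA_bld h]
          exact (s ⟨j, h⟩).2.2
        · rw [sA_bld_empty h, Finset.sum_empty]
          exact (Finsupp.notMem_support_iff.mp h).symm⟩
  left_inv R := by
    apply Subtype.ext
    apply Subtype.ext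
    ext q
    rw [mem_bld]
    constructor
    · rintro ⟨h, ha⟩
      exact mem_sA.mp ha
    · intro hq
      have h2 : q.2 ∈ f.support := by
        rw [← R.2, Finsupp.mem_support_iff]
        exact FF_pos_mem hA R.1.2.1 hq
      exact ⟨h2, mem_sA.mpr hq⟩
  right_inv s := by
    funext i
    apply Subtype.ext
    show sA (bld f (fun j => (s j).1)) i.1 = (s i).1
    rw [sA_bld i.2]


lemma key_bound (n : ℕ) (f : ℕ →₀ ℕ) (hf : (f.sum fun i N => 2 ^ i * N) = n)
    (i : ℕ) (hi : f i ≠ 0) : f i ≤ n ∧ i < n + 1 := by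
  have hmem : i ∈ f.support := Finsupp.mem_support_iff.mpr hi
  have h1 : 2 ^ i * f i ≤ n := by
    rw [← hf, Finsupp.sum]
    exact Finset.single_le_sum (f := fun j => 2 ^ j * f j) (fun j _ => Nat.zero_le _) hmem
  have h2 : i < 2 ^ i := Nat.lt_two_pow_self
  have h3 : f i ≤ 2 ^ i * f i := Nat.le_mul_of_pos_left _ (pow_pos (by norm_num) i)
  have h4 : 2 ^ i ≤ 2 ^ i * f i := Nat.le_mul_of_pos_right _ (Nat.pos_of_ne_zero hi)
  omega

lemma S_finite (n : ℕ) : {f : ℕ →₀ ℕ | (f.sum fun i N => 2 ^ i * N) = n}.Finite := by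
  rw [← Set.finite_coe_iff]
  refine Finite.of_injective
    (fun f : {f : ℕ →₀ ℕ | (f.sum fun i N => 2 ^ i * N) = n} =>
      (fun i : Fin (n + 1) => (⟨f.1 i, ?_⟩ : Fin (n + 1)))) ?_
  · by_cases h : f.1 i = 0
    · omega
    · exact Nat.lt_succ_of_le (key_bound n f.1 f.2 i h).1
  · intro f g h
    apply Subtype.ext
    ext i
    by_cases hlt : i < n + 1
    · have := congrFun h ⟨i, hlt⟩
      simpa using this
    · by_cases h1 : f.1 i = 0 <;> by_cases h2 : g.1 i = 0
      · rw [h1, h2]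
      · exact absurd (key_bound n g.1 g.2 i h2).2 hlt
      · exact absurd (key_bound n f.1 f.2 i h1).2 hlt
      · exact absurd (key_bound n f.1 f.2 i h1).2 hlt

theorem stmt_5 (A : Set ℕ) (hA : ∀ a ∈ A, 0 < a) (n : ℕ) (hn : 1 ≤ n) :
    pA A n =
      ∑ᶠ (f : ℕ →₀ ℕ) (_ : (f.sum fun i N => 2 ^ i * N) = n),
        ∏ᶠ i : ℕ, dA A (f i) := by
  classical
  have hS : {f : ℕ →₀ ℕ | (f.sum fun i N => 2 ^ i * N) = n}.Finite := S_finite n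
  set SF := hS.toFinset with hSF
  letI : Fintype (Xp A n) := Fintype.ofEquiv _ (partEquiv A hA n)
  -- LHS
  have hcard : pA A n = Fintype.card (Xp A n) := by
    rw [pA, Nat.card_congr (partEquiv A hA n), Nat.card_eq_fintype_card]
  have hmaps : ∀ R : Xp A n, FF R.1 ∈ SF :=
    fun R => hS.mem_toFinset.mpr (by show _ = n; rw [FF_sum, R.2.2])
  have hmain : Fintype.card (Xp A n)
      = ∑ f ∈ SF, (univ.filter (fun R : Xp A n => FF R.1 = f)).card := by
    rw [← Finset.card_univ]
    exact Finset.card_eq_sum_card_fiberwise (fun R _ => hmaps R)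
  have hfib : ∀ f ∈ SF,
      (univ.filter (fun R : Xp A n => FF R.1 = f)).card = ∏ i ∈ f.support, dA A (f i) := by
    intro f hf
    have hf' : (f.sum fun i N => 2 ^ i * N) = n := hS.mem_toFinset.mp hf
    rw [← Fintype.card_subtype, ← Nat.card_eq_fintype_card,
      Nat.card_congr (fiberEquiv A hA n f hf'), Nat.card_pi]
    rw [show (∏ i : {x // x ∈ f.support},
          Nat.card {s : Finset ℕ // (∀ a ∈ s, a ∈ A) ∧ ∑ a ∈ s, a = f ↑i})
        = ∏ i : {x // x ∈ f.support}, dA A (f ↑i) from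
      Finset.prod_congr rfl (fun i _ => (dA_card A hA (f ↑i)).symm)]
    exact Finset.prod_coe_sort f.support (fun i => dA A (f i))
  -- RHS
  have hin : ∀ f : ℕ →₀ ℕ, (∏ᶠ i, dA A (f i)) = ∏ i ∈ f.support, dA A (f i) := by
    intro f
    refine finprod_eq_prod_of_mulSupport_subset _ ?_
    intro i hi
    rw [Function.mem_mulSupport] at hi
    rw [Finset.mem_coe, Finsupp.mem_support_iff]
    intro h0
    rw [h0, dA_zero] at hi
    exact hi rfl
  have hrhs : (∑ᶠ (f : ℕ →₀ ℕ) (_ : (f.sum fun i N => 2 ^ i * N) = n), ∏ᶠ i, dA A (f i))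
      = ∑ f ∈ SF, ∏ i ∈ f.support, dA A (f i) := by
    have h1 : (∑ᶠ (f : ℕ →₀ ℕ) (_ : (f.sum fun i N => 2 ^ i * N) = n), ∏ᶠ i, dA A (f i))
        = ∑ᶠ f ∈ (↑SF : Set (ℕ →₀ ℕ)), ∏ᶠ i, dA A (f i) := by
      rw [hSF, hS.coe_toFinset]
      rfl
    rw [h1, finsum_mem_coe_finset]
    exact Finset.sum_congr rfl fun f _ => hin f
  rw [hcard, hmain, hrhs]
  exact Finset.sum_congr rfl hfib
end

section
/- Let A be a set of positive integers and α an even positive integer. Let p̄^A(n) := E^A(n) − O^A(n) be the signed count of unrestricted partitions of n into parts of A by parity of number of parts, and p̄^A_α(n) := E^A_α(n) − O^A_α(n) the analogous signed count over partitions where each part appears at most α times. Then for every n ≥ 1, p̄^A(n) = ∑ over all nonnegative integer solutions (N_0, N_1, ...) of n = ∑_{i≥0} (α+1)^i N_i of ∏_{i≥0} p̄^A_α(N_i). -/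
open Finset
open scoped Classical

/-- Signed count of partitions of `n` into parts from `A` by parity of number of parts. -/
noncomputable def pBar (A : Set ℕ) (n : ℕ) : ℤ :=
  (Nat.card {p : n.Partition // (∀ a ∈ p.parts, a ∈ A) ∧ Even (Multiset.card p.parts)} : ℤ) -
    (Nat.card {p : n.Partition // (∀ a ∈ p.parts, a ∈ A) ∧ Odd (Multiset.card p.parts)} : ℤ)

/-- Signed count, by parity of number of parts, of partitions of `n` into parts from `A`
with each part used at most `α` times. -/
noncomputable def pBarRes (A : Set ℕ) (α : ℕ) (n : ℕ) : ℤ :=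
  (Nat.card {p : n.Partition //
      (∀ a ∈ p.parts, a ∈ A) ∧ (∀ a, p.parts.count a ≤ α) ∧
        Even (Multiset.card p.parts)} : ℤ) -
    (Nat.card {p : n.Partition //
      (∀ a ∈ p.parts, a ∈ A) ∧ (∀ a, p.parts.count a ≤ α) ∧
        Odd (Multiset.card p.parts)} : ℤ)

lemma signed_count {β : Type*} [Fintype β] (pr : β → Prop) (k : β → ℕ) :
    ((Nat.card {x : β // pr x ∧ Even (k x)} : ℤ) - (Nat.card {x : β // pr x ∧ Odd (k x)} : ℤ))
      = ∑ x ∈ univ.filter pr, (-1:ℤ)^(k x) := by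
  rw [Nat.card_eq_fintype_card, Nat.card_eq_fintype_card, Fintype.card_subtype,
    Fintype.card_subtype,
    ← Finset.sum_filter_add_sum_filter_not (univ.filter pr) (fun x => Even (k x))
      (fun x => (-1:ℤ)^(k x))]
  have h1 : ∀ x ∈ (univ.filter pr).filter (fun x => Even (k x)), (-1:ℤ)^(k x) = 1 := by
    intro x hx; simp only [mem_filter] at hx; exact Even.neg_one_pow hx.2
  have h2 : ∀ x ∈ (univ.filter pr).filter (fun x => ¬ Even (k x)), (-1:ℤ)^(k x) = -1 := by
    intro x hx; simp only [mem_filter, Nat.not_even_iff_odd] at hx; exact Odd.neg_one_pow hx.2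
  rw [Finset.sum_congr rfl h1, Finset.sum_congr rfl h2]
  simp [Finset.filter_filter, Nat.not_even_iff_odd, and_comm, sub_eq_add_neg]

lemma pBar_eq (A : Set ℕ) (n : ℕ) :
    pBar A n = ∑ p ∈ univ.filter (fun p : n.Partition => ∀ a ∈ p.parts, a ∈ A),
      (-1:ℤ)^(Multiset.card p.parts) := by
  rw [pBar, signed_count (β := n.Partition) (fun p => ∀ a ∈ p.parts, a ∈ A)
    (fun p => Multiset.card p.parts)]
  exact Finset.sum_congr (Finset.filter_congr_decidable _ _ _) (fun _ _ => rfl)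

lemma pBarRes_eq (A : Set ℕ) (α n : ℕ) :
    pBarRes A α n = ∑ p ∈ univ.filter
        (fun p : n.Partition => (∀ a ∈ p.parts, a ∈ A) ∧ ∀ a, p.parts.count a ≤ α),
      (-1:ℤ)^(Multiset.card p.parts) := by
  have e1 : Nat.card {p : n.Partition // (∀ a ∈ p.parts, a ∈ A) ∧ (∀ a, p.parts.count a ≤ α) ∧
        Even (Multiset.card p.parts)}
      = Nat.card {p : n.Partition // ((∀ a ∈ p.parts, a ∈ A) ∧ (∀ a, p.parts.count a ≤ α)) ∧
        Even (Multiset.card p.parts)} := Nat.card_congr (Equiv.subtypeEquivRight (by tauto))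
  have e2 : Nat.card {p : n.Partition // (∀ a ∈ p.parts, a ∈ A) ∧ (∀ a, p.parts.count a ≤ α) ∧
        Odd (Multiset.card p.parts)}
      = Nat.card {p : n.Partition // ((∀ a ∈ p.parts, a ∈ A) ∧ (∀ a, p.parts.count a ≤ α)) ∧
        Odd (Multiset.card p.parts)} := Nat.card_congr (Equiv.subtypeEquivRight (by tauto))
  rw [pBarRes, e1, e2, signed_count (β := n.Partition)
    (fun p => (∀ a ∈ p.parts, a ∈ A) ∧ ∀ a, p.parts.count a ≤ α)
    (fun p => Multiset.card p.parts)]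
  exact Finset.sum_congr (Finset.filter_congr_decidable _ _ _) (fun _ _ => rfl)

lemma parts_zero (p : Nat.Partition 0) : p.parts = 0 := by
  by_contra h
  obtain ⟨a, ha⟩ := Multiset.exists_mem_of_ne_zero h
  have h1 : 0 < a := p.parts_pos ha
  have h2 := Multiset.single_le_sum (fun x hx => le_of_lt (p.parts_pos hx)) _ ha
  rw [p.parts_sum] at h2; omega

lemma pBar_zero (A : Set ℕ) : pBar A 0 = 1 := by
  rw [pBar_eq, Finset.filter_true_of_mem (fun p _ => ?_)]
  · simp [Finset.univ_unique, parts_zero]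
  · intro a ha; rw [parts_zero p] at ha; simp at ha

lemma pBarRes_zero (A : Set ℕ) (α : ℕ) : pBarRes A α 0 = 1 := by
  rw [pBarRes_eq, Finset.filter_true_of_mem (fun p _ => ?_)]
  · simp [Finset.univ_unique, parts_zero]
  · constructor
    · intro a ha; rw [parts_zero p] at ha; simp at ha
    · intro a; rw [parts_zero p]; simp

noncomputable def partsFin (A : Set ℕ) (n : ℕ) : Finset (Multiset ℕ) :=
  ((univ : Finset n.Partition).filter fun p => ∀ a ∈ p.parts, a ∈ A).image Nat.Partition.parts

noncomputable def partsResFin (A : Set ℕ) (α : ℕ) (n : ℕ) : Finset (Multiset ℕ) :=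
  ((univ : Finset n.Partition).filter fun p =>
    (∀ a ∈ p.parts, a ∈ A) ∧ ∀ a, p.parts.count a ≤ α).image Nat.Partition.parts

lemma mem_partsFin (A : Set ℕ) {n : ℕ} {M : Multiset ℕ} :
    M ∈ partsFin A n ↔ M.sum = n ∧ (∀ a ∈ M, 0 < a) ∧ ∀ a ∈ M, a ∈ A := by
  constructor
  · rintro h
    simp only [partsFin, mem_image, mem_filter, mem_univ, true_and] at h
    obtain ⟨p, hp, rfl⟩ := h
    exact ⟨p.parts_sum, fun a ha => p.parts_pos ha, hp⟩
  · rintro ⟨h1, h2, h3⟩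
    simp only [partsFin, mem_image, mem_filter, mem_univ, true_and]
    exact ⟨⟨M, fun {a} ha => h2 a ha, h1⟩, h3, rfl⟩

lemma mem_partsResFin (A : Set ℕ) (α : ℕ) {n : ℕ} {M : Multiset ℕ} :
    M ∈ partsResFin A α n ↔
      M.sum = n ∧ (∀ a ∈ M, 0 < a) ∧ (∀ a ∈ M, a ∈ A) ∧ ∀ a, M.count a ≤ α := by
  constructor
  · rintro h
    simp only [partsResFin, mem_image, mem_filter, mem_univ, true_and] at h
    obtain ⟨p, hp, rfl⟩ := h
    exact ⟨p.parts_sum, fun a ha => p.parts_pos ha, hp.1, hp.2⟩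
  · rintro ⟨h1, h2, h3, h4⟩
    simp only [partsResFin, mem_image, mem_filter, mem_univ, true_and]
    exact ⟨⟨M, fun {a} ha => h2 a ha, h1⟩, ⟨h3, h4⟩, rfl⟩

lemma pBar_eq' (A : Set ℕ) (n : ℕ) :
    pBar A n = ∑ M ∈ partsFin A n, (-1:ℤ)^(Multiset.card M) := by
  rw [pBar_eq, partsFin]
  symm
  apply Finset.sum_image
  exact fun x _ y _ h => Nat.Partition.ext h

lemma pBarRes_eq' (A : Set ℕ) (α n : ℕ) :
    pBarRes A α n = ∑ M ∈ partsResFin A α n, (-1:ℤ)^(Multiset.card M) := by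
  rw [pBarRes_eq, partsResFin]
  symm
  apply Finset.sum_image
  exact fun x _ y _ h => Nat.Partition.ext h

noncomputable def qm (α : ℕ) (M : Multiset ℕ) : Multiset ℕ :=
  Finsupp.toMultiset (Finsupp.mapRange (· % (α+1)) (by simp) M.toFinsupp)

noncomputable def rm (α : ℕ) (M : Multiset ℕ) : Multiset ℕ :=
  Finsupp.toMultiset (Finsupp.mapRange (· / (α+1)) (by simp) M.toFinsupp)

lemma count_qm (α : ℕ) (M : Multiset ℕ) (a : ℕ) : (qm α M).count a = M.count a % (α+1) := by
  simp [qm, Finsupp.count_toMultiset, Finsupp.mapRange_apply, Multiset.toFinsupp_apply]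
  exact Finsupp.mapRange_apply

lemma count_rm (α : ℕ) (M : Multiset ℕ) (a : ℕ) : (rm α M).count a = M.count a / (α+1) := by
  simp [rm, Finsupp.count_toMultiset, Finsupp.mapRange_apply, Multiset.toFinsupp_apply]

lemma qm_rm_decomp (α : ℕ) (M : Multiset ℕ) : qm α M + (α+1) • rm α M = M := by
  ext a
  simp only [Multiset.count_add, Multiset.count_nsmul, count_qm, count_rm]
  exact Nat.mod_add_div _ _

noncomputable def sSet (α : ℕ) (n : ℕ) : Finset (ℕ × ℕ) :=
  (range (n+1) ×ˢ range (n+1)).filter fun x => x.1 + (α+1)*x.2 = n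

lemma mem_sSet (α : ℕ) {n : ℕ} {x : ℕ × ℕ} :
    x ∈ sSet α n ↔ x.1 ≤ n ∧ x.2 ≤ n ∧ x.1 + (α+1)*x.2 = n := by
  simp only [sSet, mem_filter, mem_product, mem_range]
  omega

lemma core (A : Set ℕ) (α : ℕ) (hα : Even α) (n : ℕ) :
    pBar A n = ∑ x ∈ sSet α n, pBarRes A α x.1 * pBar A x.2 := by
  have neg_pow : ((-1:ℤ))^(α+1) = -1 := Odd.neg_one_pow (Even.add_one hα)
  calc pBar A n = ∑ M ∈ partsFin A n, (-1:ℤ)^(Multiset.card M) := pBar_eq' A n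
    _ = ∑ y ∈ (sSet α n).sigma (fun x => partsResFin A α x.1 ×ˢ partsFin A x.2),
          (-1:ℤ)^(Multiset.card y.2.1) * (-1:ℤ)^(Multiset.card y.2.2) := ?_
    _ = ∑ x ∈ sSet α n, ∑ z ∈ partsResFin A α x.1 ×ˢ partsFin A x.2,
          (-1:ℤ)^(Multiset.card z.1) * (-1:ℤ)^(Multiset.card z.2) := (Finset.sum_sigma _ _ _)
    _ = ∑ x ∈ sSet α n, pBarRes A α x.1 * pBar A x.2 := by
        refine Finset.sum_congr rfl fun x hx => ?_
        rw [pBarRes_eq', pBar_eq', Finset.sum_mul_sum, Finset.sum_product]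
  symm
  refine Finset.sum_bij' (i := fun y _ => y.2.1 + (α+1) • y.2.2)
    (j := fun M _ => ⟨((qm α M).sum, (rm α M).sum), (qm α M, rm α M)⟩)
    ?_ ?_ ?_ ?_ ?_
  · -- hi : lands in partsFin A n
    rintro ⟨⟨m, N⟩, q, r⟩ hy
    simp only [Finset.mem_sigma, mem_sSet, Finset.mem_product] at hy
    obtain ⟨⟨hm, hN, hsum⟩, hq, hr⟩ := hy
    rw [mem_partsResFin] at hq
    rw [mem_partsFin] at hr
    rw [mem_partsFin]
    refine ⟨?_, ?_, ?_⟩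
    · rw [Multiset.sum_add, Multiset.sum_nsmul, hq.1, hr.1]
      simpa using hsum
    · intro a ha
      rcases Multiset.mem_add.mp ha with h | h
      · exact hq.2.1 a h
      · exact hr.2.1 a (Multiset.mem_nsmul.mp h).2
    · intro a ha
      rcases Multiset.mem_add.mp ha with h | h
      · exact hq.2.2.1 a h
      · exact hr.2.2 a (Multiset.mem_nsmul.mp h).2
  · -- hj : lands in sigma
    intro M hM
    rw [mem_partsFin] at hM
    have hdec := qm_rm_decomp α M
    have hsum : (qm α M).sum + (α+1) * (rm α M).sum = n := by
      have := congrArg Multiset.sum hdec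
      rw [Multiset.sum_add, Multiset.sum_nsmul] at this
      simpa [hM.1] using this
    have memM : ∀ a, a ∈ qm α M ∨ a ∈ rm α M → a ∈ M := by
      intro a ha
      rw [← Multiset.count_pos]
      rcases ha with h | h
      · have := Multiset.count_pos.mpr h; rw [count_qm] at this
        rcases Nat.eq_zero_or_pos (M.count a) with h0 | h0
        · rw [h0] at this; simp at this
        · exact h0
      · have := Multiset.count_pos.mpr h; rw [count_rm] at this
        have := Nat.div_le_self (M.count a) (α+1)
        omega
    simp only [Finset.mem_sigma, mem_sSet, Finset.mem_product]
    have hle : (rm α M).sum ≤ (α+1) * (rm α M).sum :=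
      Nat.le_mul_of_pos_left _ (show 0 < α+1 by omega)
    refine ⟨⟨by omega, by omega, hsum⟩, ?_, ?_⟩
    · rw [mem_partsResFin]
      refine ⟨rfl, fun a ha => hM.2.1 a (memM a (Or.inl ha)),
        fun a ha => hM.2.2 a (memM a (Or.inl ha)), fun a => ?_⟩
      rw [count_qm]
      have := Nat.mod_lt (M.count a) (show 0 < α+1 by omega)
      omega
    · rw [mem_partsFin]
      exact ⟨rfl, fun a ha => hM.2.1 a (memM a (Or.inr ha)),
        fun a ha => hM.2.2 a (memM a (Or.inr ha))⟩
  · -- left_inv : j (i y) = y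
    rintro ⟨⟨m, N⟩, q, r⟩ hy
    simp only [Finset.mem_sigma, mem_sSet, Finset.mem_product] at hy
    obtain ⟨⟨hm, hN, hsum⟩, hq, hr⟩ := hy
    rw [mem_partsResFin] at hq
    rw [mem_partsFin] at hr
    have hqe : qm α (q + (α+1) • r) = q := by
      ext a
      rw [count_qm, Multiset.count_add, Multiset.count_nsmul,
        Nat.add_mul_mod_self_left, Nat.mod_eq_of_lt (by have := hq.2.2.2 a; omega)]
    have hre : rm α (q + (α+1) • r) = r := by
      ext a
      rw [count_rm, Multiset.count_add, Multiset.count_nsmul,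
        Nat.add_mul_div_left _ _ (show 0 < α+1 by omega),
        Nat.div_eq_of_lt (by have := hq.2.2.2 a; omega)]
      omega
    simp only [hqe, hre, hq.1, hr.1]
  · -- right_inv
    intro M hM
    exact qm_rm_decomp α M
  · -- weights
    rintro ⟨⟨m, N⟩, q, r⟩ hy
    rw [Multiset.card_add, Multiset.card_nsmul, pow_add, pow_mul, neg_pow]

def wt (α : ℕ) (f : ℕ →₀ ℕ) : ℕ := f.sum fun i N => (α+1)^i * N

noncomputable def gbound (n : ℕ) : ℕ →₀ ℕ := ∑ i ∈ range (n+1), Finsupp.single i n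

noncomputable def Fsol (α : ℕ) (n : ℕ) : Finset (ℕ →₀ ℕ) :=
  (Finset.Iic (gbound n)).filter fun f => wt α f = n

lemma wt_term_le (α : ℕ) {f : ℕ →₀ ℕ} {n : ℕ} (hf : wt α f = n) (i : ℕ) : (α+1)^i * f i ≤ n := by
  rcases eq_or_ne (f i) 0 with h | h
  · simp [h]
  · rw [← hf, wt]
    exact Finset.single_le_sum (f := fun i => (α+1)^i * f i) (fun _ _ => Nat.zero_le _)
      (Finsupp.mem_support_iff.mpr h)

lemma mem_Fsol (α : ℕ) (hα1 : 0 < α) {n : ℕ} {f : ℕ →₀ ℕ} : f ∈ Fsol α n ↔ wt α f = n := by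
  constructor
  · intro h; exact (Finset.mem_filter.mp h).2
  · intro h
    rw [Fsol, Finset.mem_filter]
    refine ⟨Finset.mem_Iic.mpr ?_, h⟩
    intro i
    have hterm := wt_term_le α h i
    have hpow : 0 < (α+1)^i := pow_pos (show 0 < α+1 by omega) i
    have hfi : f i ≤ n := by
      calc f i ≤ (α+1)^i * f i := Nat.le_mul_of_pos_left _ hpow
        _ ≤ n := hterm
    have hgb : gbound n i = if i ≤ n then n else 0 := by
      rw [gbound]
      rw [Finset.sum_apply']
      simp [Finsupp.single_apply, Nat.lt_succ_iff]
    by_cases hi : i ≤ n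
    · rw [hgb]; simp [hi]; exact hfi
    · rw [hgb]; simp [hi]
      by_contra h0
      have h2 : 2^i ≤ (α+1)^i := Nat.pow_le_pow_left (by omega) i
      have h3 : i < 2^i := Nat.lt_two_pow_self
      have : (α+1)^i ≤ (α+1)^i * f i := Nat.le_mul_of_pos_right _ (by omega)
      omega

lemma Fsol_zero (α : ℕ) (hα1 : 0 < α) : Fsol α 0 = {0} := by
  ext f
  rw [mem_Fsol α hα1, Finset.mem_singleton]
  constructor
  · intro h
    ext i
    have := wt_term_le α h i
    have hpow : 0 < (α+1)^i := pow_pos (show 0 < α+1 by omega) i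
    simp only [Finsupp.coe_zero, Pi.zero_apply]
    by_contra h0
    have : (α+1)^i ≤ (α+1)^i * f i := Nat.le_mul_of_pos_right _ (by omega)
    omega
  · rintro rfl; simp [wt]

lemma wt_add (α : ℕ) (u v : ℕ →₀ ℕ) : wt α (u + v) = wt α u + wt α v :=
  Finsupp.sum_add_index' (fun a => mul_zero _) (fun a b c => mul_add _ _ _)

lemma wt_single0 (α : ℕ) (m : ℕ) : wt α (Finsupp.single 0 m) = m := by
  rw [wt, Finsupp.sum_single_index (by simp)]; simp

def succEmb : ℕ ↪ ℕ := ⟨Nat.succ, Nat.succ_injective⟩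

lemma wt_emb (α : ℕ) (f : ℕ →₀ ℕ) : wt α (Finsupp.embDomain succEmb f) = (α+1) * wt α f := by
  rw [wt, Finsupp.sum_embDomain, wt, Finsupp.mul_sum]
  refine Finsupp.sum_congr fun i _ => ?_
  show (α+1)^(i+1) * f i = (α+1) * ((α+1)^i * f i)
  ring

noncomputable def tailF (f : ℕ →₀ ℕ) : ℕ →₀ ℕ :=
  Finsupp.comapDomain Nat.succ f (Nat.succ_injective.injOn)

lemma tailF_apply (f : ℕ →₀ ℕ) (i : ℕ) : tailF f i = f (i+1) := rfl

lemma decompF (f : ℕ →₀ ℕ) :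
    Finsupp.single 0 (f 0) + Finsupp.embDomain succEmb (tailF f) = f := by
  ext i
  cases i with
  | zero =>
    rw [Finsupp.add_apply, Finsupp.single_apply]
    rw [Finsupp.embDomain_notin_range]
    · simp
    · rintro ⟨j, hj⟩; exact Nat.succ_ne_zero j hj
  | succ i =>
    rw [Finsupp.add_apply, Finsupp.single_apply]
    have : Finsupp.embDomain succEmb (tailF f) (i+1) = tailF f i := by
      exact Finsupp.embDomain_apply_self succEmb (tailF f) i
    rw [this, tailF_apply]
    simp

lemma disj_supports (m : ℕ) (g : ℕ →₀ ℕ) :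
    Disjoint (Finsupp.single 0 m).support (Finsupp.embDomain succEmb g).support := by
  rw [Finset.disjoint_left]
  intro a ha hb
  rw [Finsupp.support_embDomain, Finset.mem_map] at hb
  obtain ⟨b, _, hb⟩ := hb
  have := Finsupp.support_single_subset ha
  simp at this
  subst this
  exact Nat.succ_ne_zero b hb

lemma main_ind (A : Set ℕ) (α : ℕ) (hα : Even α) (hα1 : 0 < α) :
    ∀ n, pBar A n = ∑ f ∈ Fsol α n, f.prod (fun _ N => pBarRes A α N) := by
  intro n
  induction n using Nat.strong_induction_on with
  | _ n ih =>
    rcases Nat.eq_zero_or_pos n with rfl | hn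
    · rw [pBar_zero, Fsol_zero α hα1]
      simp
    · rw [core A α hα n]
      have step : ∀ x ∈ sSet α n,
          pBarRes A α x.1 * pBar A x.2
            = ∑ f' ∈ Fsol α x.2, pBarRes A α x.1 * f'.prod (fun _ N => pBarRes A α N) := by
        intro x hx
        rw [mem_sSet] at hx
        have hlt : x.2 < n := by
          rcases Nat.lt_or_ge x.2 n with h | h
          · exact h
          · exfalso
            have hx2 : x.2 = n := le_antisymm hx.2.1 h
            have h2 : 2*n ≤ (α+1)*n := Nat.mul_le_mul_right n (by omega)
            rw [hx2] at hx
            omega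
        rw [ih x.2 hlt, Finset.mul_sum]
      rw [Finset.sum_congr rfl step, Finset.sum_sigma']
      refine Finset.sum_bij'
        (i := fun y _ => Finsupp.single 0 y.1.1 + Finsupp.embDomain succEmb y.2)
        (j := fun f _ => ⟨(f 0, wt α (tailF f)), tailF f⟩) ?_ ?_ ?_ ?_ ?_
      · -- hi
        rintro ⟨⟨m, N⟩, f'⟩ hy
        simp only [Finset.mem_sigma, mem_sSet] at hy
        obtain ⟨⟨hm, hN, hsum⟩, hf'⟩ := hy
        rw [mem_Fsol α hα1] at hf' ⊢
        rw [wt_add, wt_single0, wt_emb, hf']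
        exact hsum
      · -- hj
        intro f hf
        rw [mem_Fsol α hα1] at hf
        have hdec : f 0 + (α+1) * wt α (tailF f) = n := by
          conv_rhs => rw [← hf, ← decompF f]
          rw [wt_add, wt_single0, wt_emb]
        have hle : wt α (tailF f) ≤ (α+1) * wt α (tailF f) :=
          Nat.le_mul_of_pos_left _ (by omega)
        simp only [Finset.mem_sigma, mem_sSet]
        exact ⟨⟨by omega, by omega, hdec⟩, (mem_Fsol α hα1).mpr rfl⟩
      · -- left_inv
        rintro ⟨⟨m, N⟩, f'⟩ hy
        simp only [Finset.mem_sigma, mem_sSet] at hy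
        obtain ⟨⟨hm, hN, hsum⟩, hf'⟩ := hy
        rw [mem_Fsol α hα1] at hf'
        set F := Finsupp.single 0 m + Finsupp.embDomain succEmb f' with hF
        have h0 : F 0 = m := by
          rw [hF, Finsupp.add_apply, Finsupp.single_apply,
            Finsupp.embDomain_notin_range]
          · simp
          · rintro ⟨j, hj⟩; exact Nat.succ_ne_zero j hj
        have htail : tailF F = f' := by
          ext i
          rw [tailF_apply, hF, Finsupp.add_apply, Finsupp.single_apply]
          have : Finsupp.embDomain succEmb f' (i+1) = f' i :=
            Finsupp.embDomain_apply_self succEmb f' i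
          rw [this]; simp
        simp only [h0, htail, hf']
      · -- right_inv
        intro f hf
        exact decompF f
      · -- weights
        rintro ⟨⟨m, N⟩, f'⟩ hy
        show pBarRes A α m * f'.prod (fun _ N => pBarRes A α N) = _
        rw [Finsupp.prod_add_index_of_disjoint (disj_supports m f'),
          Finsupp.prod_single_index (by rw [pBarRes_zero]),
          Finsupp.prod_embDomain]

theorem stmt_12 (A : Set ℕ) (hA : ∀ a ∈ A, 0 < a) (α : ℕ) (hα : Even α) (hα' : 0 < α)
    (n : ℕ) (hn : 1 ≤ n) :
    pBar A n =
      ∑ᶠ (f : ℕ →₀ ℕ) (_ : (f.sum fun i N => (α + 1) ^ i * N) = n),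
        ∏ᶠ i : ℕ, pBarRes A α (f i) := by
  have hprod : ∀ f : ℕ →₀ ℕ,
      (∏ᶠ i : ℕ, pBarRes A α (f i)) = f.prod (fun _ N => pBarRes A α N) := by
    intro f
    rw [finprod_eq_finset_prod_of_mulSupport_subset _ (s := f.support) ?_]
    · rfl
    · intro i hi
      simp only [Function.mem_mulSupport] at hi
      exact Finset.mem_coe.mpr (Finsupp.mem_support_iff.mpr
        (fun h => hi (by rw [h, pBarRes_zero])))
  have h1 : ∀ f : ℕ →₀ ℕ,
      (∑ᶠ (_ : (f.sum fun i N => (α + 1) ^ i * N) = n), ∏ᶠ i : ℕ, pBarRes A α (f i))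
        = if wt α f = n then f.prod (fun _ N => pBarRes A α N) else 0 := by
    intro f
    rw [finsum_eq_if, hprod f]
    rfl
  rw [finsum_congr h1]
  rw [finsum_eq_sum_of_support_subset _ (s := Fsol α n) ?_]
  · rw [main_ind A α hα hα' n]
    refine Finset.sum_congr rfl fun f hf => ?_
    rw [if_pos ((mem_Fsol α hα').mp hf)]
  · intro f hf
    simp only [Function.mem_support, ne_eq] at hf
    have : wt α f = n := by
      by_contra h; rw [if_neg h] at hf; exact hf rfl
    exact Finset.mem_coe.mpr ((mem_Fsol α hα').mpr this)
end

section
/- For |q| < 1, an even positive integer α, and any injective ψ : ℕ → ℕ with positive values, ∏_{n≥1} 1/(1 + q^{ψ(n)}) = ∏_{i≥0} ∏_{n≥1} (1 − q^{(α+1)^i ψ(n)} + q^{2(α+1)^i ψ(n)} − ... + q^{α(α+1)^i ψ(n)}). -/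
open Complex Finset

theorem stmt_13 (q : ℂ) (hq : ‖q‖ < 1) (ψ : ℕ → ℕ)
    (hinj : Function.Injective ψ) (hpos : ∀ n, 1 ≤ ψ n)
    (α : ℕ) (hα : Even α) (hα' : 0 < α) :
    ∏' n : ℕ, ((1 : ℂ) + q ^ ψ n)⁻¹ =
      ∏' i : ℕ, ∏' n : ℕ, ∑ k ∈ Finset.range (α + 1),
        (-1 : ℂ) ^ k * q ^ (k * ((α + 1) ^ i * ψ n)) := by
  set r : ℝ := ‖q‖ with hrdef
  have hr0 : 0 ≤ r := norm_nonneg q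
  set C : ℝ := (1 - r)⁻¹ / 2 + 1 with hCdef
  have hrinv : 0 ≤ (1 - r)⁻¹ := inv_nonneg.2 (by linarith)
  have hC0 : 0 ≤ C := by positivity
  -- basic geometric summability
  have hTsum : Summable (fun n : ℕ => r ^ ψ n) :=
    (summable_geometric_of_lt_one hr0 hq).comp_injective hinj
  set T : ℝ := ∑' n : ℕ, r ^ ψ n with hTdef
  have hT0 : 0 ≤ T := tsum_nonneg fun n => pow_nonneg hr0 _
  -- norms of the basic terms
  have hgnorm : ∀ m n : ℕ, ‖q ^ (m * ψ n)‖ = r ^ (m * ψ n) := fun m n => norm_pow q _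
  have hgle : ∀ m n : ℕ, 1 ≤ m → ‖q ^ (m * ψ n)‖ ≤ r ^ ψ n := by
    intro m n hm
    rw [hgnorm]
    exact pow_le_pow_of_le_one hr0 hq.le (Nat.le_mul_of_pos_left _ hm)
  have hglr : ∀ m n : ℕ, 1 ≤ m → ‖q ^ (m * ψ n)‖ ≤ r := by
    intro m n hm
    refine (hgle m n hm).trans ?_
    simpa using pow_le_pow_of_le_one hr0 hq.le (hpos n)
  have hglt : ∀ m n : ℕ, 1 ≤ m → ‖q ^ (m * ψ n)‖ < 1 := fun m n hm => (hglr m n hm).trans_lt hq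
  have hne : ∀ m n : ℕ, 1 ≤ m → (1 : ℂ) + q ^ (m * ψ n) ≠ 0 := by
    intro m n hm h
    have : ‖q ^ (m * ψ n)‖ = 1 := by
      have : q ^ (m * ψ n) = -1 := by linear_combination h
      rw [this]; simp
    exact absurd this (ne_of_lt (hglt m n hm))
  -- log bound
  have hlogle : ∀ z : ℂ, ‖z‖ ≤ r → ‖Complex.log (1 + z)‖ ≤ C * ‖z‖ := by
    intro z hz
    have hz1 : ‖z‖ < 1 := hz.trans_lt hq
    refine (norm_log_one_add_le hz1).trans ?_
    have h1 : ‖z‖ ^ 2 ≤ ‖z‖ := by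
      nlinarith [norm_nonneg z]
    have h2 : (1 - ‖z‖)⁻¹ ≤ (1 - r)⁻¹ := by
      apply inv_anti₀ (by linarith) (by linarith)
    have h3 : ‖z‖ ^ 2 * (1 - ‖z‖)⁻¹ ≤ ‖z‖ * (1 - r)⁻¹ := by
      apply mul_le_mul h1 h2 (inv_nonneg.2 (by linarith)) (norm_nonneg z)
    rw [hCdef]
    nlinarith [norm_nonneg z]
  -- summability of the logs
  have hS : ∀ m : ℕ, 1 ≤ m → Summable (fun n : ℕ => Complex.log (1 + q ^ (m * ψ n))) := by
    intro m hm
    apply Summable.of_norm_bounded (g := fun n => C * r ^ ψ n) (hTsum.mul_left C)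
    intro n
    exact (hlogle _ (hglr m n hm)).trans (by
      have := hgle m n hm
      nlinarith [norm_nonneg (q ^ (m * ψ n))])
  set L : ℕ → ℂ := fun m => ∑' n : ℕ, Complex.log (1 + q ^ (m * ψ n)) with hLdef
  -- bound on L m
  have hLb : ∀ m : ℕ, 1 ≤ m → ‖L m‖ ≤ C * T * r ^ (m - 1) := by
    intro m hm
    have hmaj : ∀ n : ℕ, ‖Complex.log (1 + q ^ (m * ψ n))‖ ≤ C * r ^ (m - 1) * r ^ ψ n := by
      intro n
      refine (hlogle _ (hglr m n hm)).trans ?_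
      have hle : (m - 1) + ψ n ≤ m * ψ n := by
        have h1 : 1 ≤ ψ n := hpos n
        calc (m - 1) + ψ n ≤ (m - 1) * ψ n + ψ n := by
              exact Nat.add_le_add_right (Nat.le_mul_of_pos_right _ (hpos n)) _
          _ = (m - 1 + 1) * ψ n := by ring
          _ = m * ψ n := by rw [Nat.sub_add_cancel hm]
      have : ‖q ^ (m * ψ n)‖ ≤ r ^ ((m - 1) + ψ n) := by
        rw [hgnorm]
        exact pow_le_pow_of_le_one hr0 hq.le hle
      rw [pow_add] at this
      calc C * ‖q ^ (m * ψ n)‖ ≤ C * (r ^ (m - 1) * r ^ ψ n) := by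
            exact mul_le_mul_of_nonneg_left this hC0
        _ = C * r ^ (m - 1) * r ^ ψ n := by ring
    calc ‖L m‖ ≤ ∑' n : ℕ, ‖Complex.log (1 + q ^ (m * ψ n))‖ := norm_tsum_le_tsum_norm ((hS m hm).norm)
      _ ≤ ∑' n : ℕ, C * r ^ (m - 1) * r ^ ψ n := by
          exact Summable.tsum_le_tsum hmaj ((hS m hm).norm) (hTsum.mul_left _)
      _ = C * r ^ (m - 1) * T := by rw [tsum_mul_left]
      _ = C * T * r ^ (m - 1) := by ring
  set A : ℕ := α + 1 with hAdef
  have hA2 : 2 ≤ A := by omega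
  have hApow : ∀ i : ℕ, 1 ≤ A ^ i := fun i => Nat.one_le_pow _ _ (by omega)
  -- the telescoping differences
  set d : ℕ → ℂ := fun i => L (A ^ (i + 1)) - L (A ^ i) with hddef
  have hAi : ∀ i : ℕ, i ≤ A ^ i - 1 := by
    intro i
    have : i < A ^ i := Nat.lt_pow_self (show 1 < A by omega)
    omega
  have hLgeo : ∀ i : ℕ, ‖L (A ^ i)‖ ≤ C * T * r ^ i := by
    intro i
    refine (hLb _ (hApow i)).trans ?_
    have h := pow_le_pow_of_le_one hr0 hq.le (hAi i)
    exact mul_le_mul_of_nonneg_left h (mul_nonneg hC0 hT0)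
  have hd : Summable d := by
    apply Summable.of_norm_bounded (g := fun i => C * T * r ^ (i + 1) + C * T * r ^ i)
      (((summable_geometric_of_lt_one hr0 hq).mul_left (C * T)).comp_injective
        (add_left_injective 1) |>.add ((summable_geometric_of_lt_one hr0 hq).mul_left (C * T)))
    intro i
    refine (norm_sub_le _ _).trans ?_
    exact add_le_add (hLgeo (i + 1)) (hLgeo i)
  -- the sum of d is -L 1
  have hLtend : Filter.Tendsto (fun N : ℕ => L (A ^ N)) Filter.atTop (nhds 0) := by
    apply squeeze_zero_norm hLgeo
    have := (tendsto_pow_atTop_nhds_zero_of_lt_one hr0 hq).const_mul (C * T)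
    simpa using this
  have hdsum : HasSum d (-(L 1)) := by
    have h1 : Filter.Tendsto (fun N : ℕ => ∑ i ∈ range N, d i) Filter.atTop (nhds (∑' i, d i)) :=
      hd.hasSum.tendsto_sum_nat
    have h2 : ∀ N : ℕ, ∑ i ∈ range N, d i = L (A ^ N) - L (A ^ 0) := fun N =>
      Finset.sum_range_sub (fun i => L (A ^ i)) N
    have h3 : Filter.Tendsto (fun N : ℕ => ∑ i ∈ range N, d i) Filter.atTop (nhds (0 - L 1)) := by
      simp_rw [h2]
      apply Filter.Tendsto.sub hLtend
      simp [pow_zero]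
    have : ∑' i, d i = -(L 1) := by
      have := tendsto_nhds_unique h1 h3
      rw [this]; ring
    rw [← this]; exact hd.hasSum
  -- inner factor identity
  have hinner : ∀ i n : ℕ, (∑ k ∈ Finset.range (α + 1),
      (-1 : ℂ) ^ k * q ^ (k * ((α + 1) ^ i * ψ n))) =
      Complex.exp (Complex.log (1 + q ^ (A ^ (i + 1) * ψ n)) -
        Complex.log (1 + q ^ (A ^ i * ψ n))) := by
    intro i n
    set x : ℂ := q ^ (A ^ i * ψ n) with hxdef
    have hx1 : (1 : ℂ) + x ≠ 0 := hne _ n (hApow i)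
    have hx2 : (1 : ℂ) + q ^ (A ^ (i + 1) * ψ n) ≠ 0 := hne _ n (hApow (i + 1))
    have hsum : (∑ k ∈ Finset.range (α + 1), (-1 : ℂ) ^ k * q ^ (k * ((α + 1) ^ i * ψ n)))
        = ∑ k ∈ Finset.range (α + 1), (-x) ^ k := by
      apply Finset.sum_congr rfl
      intro k _
      rw [show (-x) ^ k = (-1 : ℂ) ^ k * x ^ k from neg_pow x k, hxdef, ← pow_mul,
        mul_comm (A ^ i * ψ n) k]
    have hgeom : (∑ k ∈ Finset.range (α + 1), (-x) ^ k) * ((-x) - 1) = (-x) ^ (α + 1) - 1 :=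
      geom_sum_mul (-x) (α + 1)
    have hodd : Odd (α + 1) := Even.add_one hα
    have hx3 : x ^ (α + 1) = q ^ (A ^ (i + 1) * ψ n) := by
      rw [hxdef, ← pow_mul]
      congr 1
      rw [hAdef]; ring
    have hval : (∑ k ∈ Finset.range (α + 1), (-x) ^ k) * (1 + x) = 1 + q ^ (A ^ (i + 1) * ψ n) := by
      have := hgeom
      rw [hodd.neg_pow] at this
      rw [← hx3]
      linear_combination -this
    rw [hsum, Complex.exp_sub, Complex.exp_log hx2, Complex.exp_log hx1,
      eq_div_iff hx1, hval]
  -- the RHS has value exp (-(L 1))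
  have hinnerprod : ∀ i : ℕ, (∏' n : ℕ, ∑ k ∈ Finset.range (α + 1),
      (-1 : ℂ) ^ k * q ^ (k * ((α + 1) ^ i * ψ n))) = Complex.exp (d i) := by
    intro i
    have hs : HasSum (fun n : ℕ => Complex.log (1 + q ^ (A ^ (i + 1) * ψ n)) -
        Complex.log (1 + q ^ (A ^ i * ψ n))) (d i) :=
      ((hS _ (hApow (i + 1))).hasSum.sub (hS _ (hApow i)).hasSum)
    have hp2 : HasProd (fun n : ℕ => ∑ k ∈ Finset.range (α + 1),
        (-1 : ℂ) ^ k * q ^ (k * ((α + 1) ^ i * ψ n))) (Complex.exp (d i)) := by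
      rw [show (fun n : ℕ => ∑ k ∈ Finset.range (α + 1),
          (-1 : ℂ) ^ k * q ^ (k * ((α + 1) ^ i * ψ n))) = Complex.exp ∘
          (fun n : ℕ => Complex.log (1 + q ^ (A ^ (i + 1) * ψ n)) -
            Complex.log (1 + q ^ (A ^ i * ψ n))) from funext fun n => hinner i n]
      exact hs.cexp
    exact hp2.tprod_eq
  have hRHS : (∏' i : ℕ, ∏' n : ℕ, ∑ k ∈ Finset.range (α + 1),
      (-1 : ℂ) ^ k * q ^ (k * ((α + 1) ^ i * ψ n))) = Complex.exp (-(L 1)) := by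
    have hp2 : HasProd (fun i : ℕ => ∏' n : ℕ, ∑ k ∈ Finset.range (α + 1),
        (-1 : ℂ) ^ k * q ^ (k * ((α + 1) ^ i * ψ n))) (Complex.exp (-(L 1))) := by
      rw [show (fun i : ℕ => ∏' n : ℕ, ∑ k ∈ Finset.range (α + 1),
          (-1 : ℂ) ^ k * q ^ (k * ((α + 1) ^ i * ψ n))) = Complex.exp ∘ d from
          funext fun i => (hinnerprod i).trans rfl]
      exact hdsum.cexp
    exact hp2.tprod_eq
  -- the LHS has the same value
  have hLHS : (∏' n : ℕ, ((1 : ℂ) + q ^ ψ n)⁻¹) = Complex.exp (-(L 1)) := by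
    have hs : HasSum (fun n : ℕ => -(Complex.log (1 + q ^ (1 * ψ n)))) (-(L 1)) :=
      (hS 1 le_rfl).hasSum.neg
    have hp2 : HasProd (fun n : ℕ => ((1 : ℂ) + q ^ ψ n)⁻¹) (Complex.exp (-(L 1))) := by
      rw [show (fun n : ℕ => ((1 : ℂ) + q ^ ψ n)⁻¹) = Complex.exp ∘
          (fun n : ℕ => -(Complex.log (1 + q ^ (1 * ψ n)))) from funext fun n => by
        simp only [Function.comp, Complex.exp_neg, one_mul]
        rw [Complex.exp_log (by simpa using hne 1 n le_rfl)]]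
      exact hs.cexp
    exact hp2.tprod_eq
  rw [hLHS, hRHS]
end

section
/- Let A be a set of positive integers and α a positive integer. Define Γ_α(m) as the coefficient of q^m in ∏_{i≥0} ∏_{a ∈ A} 1/(1 + q^{2^i (α+1) a}); equivalently Γ_α(m) = ∑ over nonnegative integer solutions (N_0, N_1, ...) of m = (α+1) ∑_{i≥0} 2^i N_i of ∏_{i≥0} p̄^A(N_i), with Γ_α(m) = 0 when no solution exists and Γ_α(0) = 1. Then p^A_α(n) = ∑_{i=0}^{n} p^A(n−i) · Γ_α(i) for all n. -/
/-- `Γ_α(m)`: sum over nonnegative-integer solutions of `m = (α+1) ∑ 2^i N_i` of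
`∏_i p̄^A(N_i)`; it is `0` if there are no solutions and `1` at `m = 0`. -/
noncomputable def Gamma (A : Set ℕ) (α : ℕ) (m : ℕ) : ℤ :=
  ∑ᶠ (f : ℕ →₀ ℕ) (_ : (α + 1) * (f.sum fun i N => 2 ^ i * N) = m),
    ∏ᶠ i : ℕ, pBar A (f i)


open PowerSeries Finset
open scoped Classical
noncomputable section
namespace Stmt14Aux
def ser (i : ℕ) (g : ℕ → ℤ) : PowerSeries ℤ :=
  PowerSeries.mk fun k => if i ∣ k then g (k / i) else 0
lemma coeff_ser (i : ℕ) (g : ℕ → ℤ) (k : ℕ) :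
    coeff k (ser i g) = if i ∣ k then g (k / i) else 0 := coeff_mk _ _
theorem genGF (n : ℕ) (s : Finset ℕ) (hs : ∀ i ∈ s, 0 < i) (g : ℕ → ℕ → ℤ) :
    ∑ p ∈ Finset.univ.filter (fun p : n.Partition => ∀ j ∈ p.parts, j ∈ s),
        ∏ i ∈ s, g i (p.parts.count i)
      = coeff n (∏ i ∈ s, ser i (g i)) := by
  rw [coeff_prod]
  simp_rw [coeff_ser, Finset.prod_ite_zero, ← Finset.sum_filter]
  refine Finset.sum_bij (fun p _ =>
      Finsupp.onFinset p.parts.toFinset (fun i => p.parts.count i * i)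
        (fun a ha => by
          simp only [ne_eq, mul_eq_zero, not_or, Multiset.count_eq_zero] at ha
          simpa using ha.1)) ?_ ?_ ?_ ?_
  case refine_1 =>
    intro p hp
    simp only [mem_filter, mem_univ, true_and] at hp
    simp only [mem_filter, mem_finsuppAntidiag]
    refine ⟨⟨?_, ?_⟩, ?_⟩
    · conv_rhs => rw [← p.parts_sum]
      rw [Finset.sum_multiset_count_of_subset _ s (fun i => by
        simp only [Multiset.mem_toFinset]; exact hp i)]
      simp [Finsupp.onFinset_apply, smul_eq_mul]
    · refine (Finsupp.support_onFinset_subset).trans ?_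
      intro i hi
      exact hp i (Multiset.mem_toFinset.mp hi)
    · intro i _
      simp only [Finsupp.onFinset_apply]
      exact Dvd.intro_left _ rfl
  case refine_2 =>
    intro p₁ hp₁ p₂ hp₂ h
    simp only [mem_filter, mem_univ, true_and] at hp₁ hp₂
    apply Nat.Partition.ext
    ext i
    have := congrFun (congrArg (fun f : ℕ →₀ ℕ => (f : ℕ → ℕ)) h) i
    simp only [Finsupp.onFinset_apply] at this
    by_cases hi : i = 0
    · subst hi
      rw [Multiset.count_eq_zero_of_notMem fun a => Nat.lt_irrefl 0 (hs 0 (hp₁ 0 a)),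
        Multiset.count_eq_zero_of_notMem fun a => Nat.lt_irrefl 0 (hs 0 (hp₂ 0 a))]
    · exact Nat.eq_of_mul_eq_mul_right (Nat.pos_of_ne_zero hi) this
  case refine_3 =>
    rintro f hf
    simp only [mem_filter, mem_finsuppAntidiag] at hf
    obtain ⟨⟨hsum, hsupp⟩, hdvd⟩ := hf
    refine ⟨⟨∑ i ∈ s, Multiset.replicate (f i / i) i, ?_, ?_⟩, ?_, ?_⟩
    · intro i hi
      simp only [Multiset.mem_sum] at hi
      rcases hi with ⟨t, ht, z⟩
      rw [Multiset.eq_of_mem_replicate z]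
      exact hs t ht
    · simp_rw [Multiset.sum_sum, Multiset.sum_replicate, Nat.nsmul_eq_mul]
      rw [← hsum]
      exact Finset.sum_congr rfl fun i hi => Nat.div_mul_cancel (hdvd i hi)
    · simp only [mem_filter, mem_univ, true_and]
      intro j hj
      rw [Multiset.mem_sum] at hj
      rcases hj with ⟨t, ht, z⟩
      rwa [Multiset.eq_of_mem_replicate z]
    · ext i
      simp only [Finsupp.onFinset_apply, Multiset.count_sum', Multiset.count_replicate,
        Finset.sum_ite_eq']
      split_ifs with h
      · exact Nat.div_mul_cancel (hdvd i h)
      · rw [zero_mul]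
        exact (Finsupp.notMem_support_iff.mp fun hc => h (hsupp hc)).symm
  case refine_4 =>
    intro p hp
    simp only [mem_filter, mem_univ, true_and] at hp
    refine Finset.prod_congr rfl fun i hi => ?_
    simp only [Finsupp.onFinset_apply]
    rw [Nat.mul_div_cancel _ (hs i hi)]

/-- truncated part set -/
def Sfin (A : Set ℕ) (n : ℕ) : Finset ℕ := (Finset.range (n+1)).filter (· ∈ A)

lemma mem_Sfin {A : Set ℕ} {n a : ℕ} : a ∈ Sfin A n ↔ a ≤ n ∧ a ∈ A := by
  simp [Sfin, Nat.lt_succ_iff]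

lemma Sfin_pos {A : Set ℕ} (hA : ∀ a ∈ A, 0 < a) (n : ℕ) : ∀ a ∈ Sfin A n, 0 < a :=
  fun a ha => hA a (mem_Sfin.mp ha).2

lemma part_le {m : ℕ} (p : m.Partition) {i : ℕ} (hi : i ∈ p.parts) : i ≤ m := by
  simpa [p.parts_sum] using Multiset.single_le_sum (fun _ _ => Nat.zero_le _) _ hi

lemma filter_Sfin (A : Set ℕ) {n m : ℕ} (hm : m ≤ n) :
    (Finset.univ.filter fun p : m.Partition => ∀ j ∈ p.parts, j ∈ Sfin A n) =
      (Finset.univ.filter fun p : m.Partition => ∀ a ∈ p.parts, a ∈ A) := by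
  refine Finset.filter_congr fun p _ => ?_
  constructor
  · exact fun h j hj => (mem_Sfin.mp (h j hj)).2
  · exact fun h j hj => mem_Sfin.mpr ⟨(part_le p hj).trans hm, h j hj⟩

theorem pA_eq (A : Set ℕ) (hA : ∀ a ∈ A, 0 < a) {n m : ℕ} (hm : m ≤ n) :
    ((pA A m : ℤ)) = coeff m (∏ a ∈ Sfin A n, ser a fun _ => 1) := by
  rw [← genGF m _ (Sfin_pos hA n) (fun _ _ => 1)]
  simp only [Finset.prod_const_one, Finset.sum_const, nsmul_eq_mul, mul_one]
  rw [filter_Sfin A hm, pA, Nat.card_eq_fintype_card, Fintype.card_subtype]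

theorem pAres_eq (A : Set ℕ) (hA : ∀ a ∈ A, 0 < a) (Alpha n : ℕ) :
    ((pAres A Alpha n : ℤ)) =
      coeff n (∏ a ∈ Sfin A n, ser a fun k => if k ≤ Alpha then 1 else 0) := by
  rw [← genGF n _ (Sfin_pos hA n) (fun _ k => if k ≤ Alpha then 1 else 0)]
  simp_rw [Finset.prod_boole, Finset.sum_boole]
  rw [pAres, Nat.card_eq_fintype_card, Fintype.card_subtype]
  norm_cast
  congr 1
  rw [Finset.filter_filter]
  refine Finset.filter_congr fun p _ => ?_
  constructor
  · rintro ⟨h1, h2⟩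
    exact ⟨fun j hj => mem_Sfin.mpr ⟨part_le p hj, h1 j hj⟩, fun a _ => h2 a⟩
  · rintro ⟨h1, h2⟩
    refine ⟨fun j hj => (mem_Sfin.mp (h1 j hj)).2, fun a => ?_⟩
    by_cases ha : a ∈ Sfin A n
    · exact h2 a ha
    · rw [Multiset.count_eq_zero_of_notMem fun hc => ha (h1 a hc)]
      exact Nat.zero_le _

theorem pBar_eq (A : Set ℕ) (hA : ∀ a ∈ A, 0 < a) {n m : ℕ} (hm : m ≤ n) :
    pBar A m = coeff m (∏ a ∈ Sfin A n, ser a fun k => (-1) ^ k) := by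
  rw [← genGF m _ (Sfin_pos hA n) (fun _ k => (-1) ^ k)]
  have key : ∀ p ∈ Finset.univ.filter
      (fun p : m.Partition => ∀ j ∈ p.parts, j ∈ Sfin A n),
      (∏ i ∈ Sfin A n, ((-1 : ℤ)) ^ p.parts.count i) = (-1) ^ Multiset.card p.parts := by
    intro p hp
    simp only [Finset.mem_filter, Finset.mem_univ, true_and] at hp
    rw [Finset.prod_pow_eq_pow_sum]
    congr 1
    rw [← Multiset.toFinset_sum_count_eq p.parts]
    exact (Finset.sum_subset (fun i hi => hp i (Multiset.mem_toFinset.mp hi))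
      (fun i _ hi => Multiset.count_eq_zero_of_notMem
        (fun hc => hi (Multiset.mem_toFinset.mpr hc)))).symm
  rw [Finset.sum_congr rfl key]
  rw [pBar, Nat.card_eq_fintype_card, Nat.card_eq_fintype_card, Fintype.card_subtype,
    Fintype.card_subtype]
  rw [filter_Sfin A hm]
  rw [← Finset.sum_filter_add_sum_filter_not _ (fun p : m.Partition =>
    Even (Multiset.card p.parts))]
  rw [Finset.filter_filter, Finset.filter_filter]
  have h1 : ∀ p ∈ Finset.univ.filter (fun p : m.Partition =>
      (∀ a ∈ p.parts, a ∈ A) ∧ Even (Multiset.card p.parts)),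
      ((-1 : ℤ)) ^ Multiset.card p.parts = 1 := by
    intro p hp
    simp only [Finset.mem_filter] at hp
    exact hp.2.2.neg_one_pow
  have h2 : ∀ p ∈ Finset.univ.filter (fun p : m.Partition =>
      (∀ a ∈ p.parts, a ∈ A) ∧ ¬Even (Multiset.card p.parts)),
      ((-1 : ℤ)) ^ Multiset.card p.parts = -1 := by
    intro p hp
    simp only [Finset.mem_filter] at hp
    exact (Nat.not_even_iff_odd.mp hp.2.2).neg_one_pow
  rw [Finset.sum_congr rfl h1, Finset.sum_congr rfl h2]
  simp only [Finset.sum_const, nsmul_eq_mul, mul_one, mul_neg_one]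
  rw [show (Finset.univ.filter fun p : m.Partition =>
        (∀ a ∈ p.parts, a ∈ A) ∧ ¬Even (Multiset.card p.parts)) =
      (Finset.univ.filter fun p : m.Partition =>
        (∀ a ∈ p.parts, a ∈ A) ∧ Odd (Multiset.card p.parts)) from
    Finset.filter_congr fun p _ => by simp [Nat.not_even_iff_odd]]
  push_cast
  ring

lemma pBar_zero (A : Set ℕ) : pBar A 0 = 1 := by
  rw [pBar]
  have h1 : Nat.card {p : (0:ℕ).Partition //
      (∀ a ∈ p.parts, a ∈ A) ∧ Even (Multiset.card p.parts)} = 1 := by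
    rw [Nat.card_eq_one_iff_unique]
    constructor
    · constructor
      rintro ⟨p, hp⟩ ⟨q, hq⟩
      simp [Subsingleton.elim p q]
    · exact ⟨⟨default, by simp, by simp⟩⟩
  have h2 : Nat.card {p : (0:ℕ).Partition //
      (∀ a ∈ p.parts, a ∈ A) ∧ Odd (Multiset.card p.parts)} = 0 := by
    simp only [Nat.card_eq_zero]
    left
    constructor
    rintro ⟨p, -, hp⟩
    rw [p.partition_zero_parts] at hp
    simp at hp
  rw [h1, h2]
  simp

-- ## Series algebra

lemma dvd_of_sub {a k : ℕ} (h1 : a ≤ k) (h2 : a ∣ k - a) : a ∣ k := by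
  have := Nat.dvd_add h2 (dvd_refl a)
  rwa [Nat.sub_add_cancel h1] at this

lemma Dser_mul_inv {a : ℕ} (ha : 0 < a) :
    (1 - (X : PowerSeries ℤ) ^ a) * ser a (fun _ => 1) = 1 := by
  ext k
  rw [sub_mul, one_mul, map_sub, coeff_X_pow_mul', coeff_ser, coeff_one]
  by_cases hk : k = 0
  · subst hk
    rw [if_pos (Nat.dvd_zero a), if_neg (by omega : ¬ a ≤ 0), if_pos rfl]
    ring
  · rw [if_neg hk]
    by_cases hd : a ∣ k
    · have hak : a ≤ k := Nat.le_of_dvd (Nat.pos_of_ne_zero hk) hd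
      rw [if_pos hd, if_pos hak, coeff_ser, if_pos (Nat.dvd_sub hd dvd_rfl)]
      ring
    · rw [if_neg hd]
      split_ifs with h1
      · rw [coeff_ser, if_neg fun h2 => hd (dvd_of_sub h1 h2)]
        ring
      · ring

lemma Eser_mul_J {a : ℕ} (ha : 0 < a) :
    (1 + (X : PowerSeries ℤ) ^ a) * ser a (fun k => (-1) ^ k) = 1 := by
  ext k
  rw [add_mul, one_mul, map_add, coeff_X_pow_mul', coeff_ser, coeff_one]
  by_cases hk : k = 0
  · subst hk
    rw [if_pos (Nat.dvd_zero a), if_neg (by omega : ¬ a ≤ 0), if_pos rfl]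
    norm_num
  · rw [if_neg hk]
    by_cases hd : a ∣ k
    · have hak : a ≤ k := Nat.le_of_dvd (Nat.pos_of_ne_zero hk) hd
      rw [if_pos hd, if_pos hak, coeff_ser, if_pos (Nat.dvd_sub hd dvd_rfl)]
      obtain ⟨q, rfl⟩ := hd
      have hq : 0 < q := by
        rcases Nat.eq_zero_or_pos q with rfl | h
        · simp at hk
        · exact h
      have h1 : a * q - a = a * (q - 1) := by
        rw [Nat.mul_sub, mul_one]
      rw [h1, Nat.mul_div_cancel_left _ ha, Nat.mul_div_cancel_left _ ha]
      obtain ⟨r, rfl⟩ : ∃ r, q = r + 1 := ⟨q - 1, by omega⟩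
      rw [Nat.add_sub_cancel, pow_succ]
      ring
    · rw [if_neg hd]
      split_ifs with h1
      · rw [coeff_ser, if_neg fun h2 => hd (dvd_of_sub h1 h2)]
        ring
      · ring

lemma R_eq_geom {a : ℕ} (ha : 0 < a) (b : ℕ) :
    ser a (fun j => if j < b then 1 else 0) = ∑ j ∈ Finset.range b, ((X : PowerSeries ℤ) ^ a) ^ j := by
  ext k
  rw [coeff_ser, map_sum]
  simp_rw [← pow_mul, coeff_X_pow]
  by_cases hd : a ∣ k
  · obtain ⟨q, rfl⟩ := hd
    rw [if_pos ⟨q, rfl⟩, Nat.mul_div_cancel_left _ ha]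
    have heq : ∀ x, (if a * q = a * x then (1:ℤ) else 0) = if x = q then 1 else 0 := by
      intro x
      congr 1
      simp only [eq_iff_iff]
      constructor
      · exact fun h => (Nat.eq_of_mul_eq_mul_left ha h).symm
      · rintro rfl; rfl
    rw [Finset.sum_congr rfl fun x _ => heq x, Finset.sum_ite_eq' (Finset.range b) q fun _ => (1:ℤ)]
    simp [Finset.mem_range]
  · rw [if_neg hd]
    refine (Finset.sum_eq_zero fun j _ => ?_).symm
    rw [if_neg fun h => hd ⟨j, h⟩]

lemma Dser_mul_R {a : ℕ} (ha : 0 < a) (b : ℕ) :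
    (1 - (X : PowerSeries ℤ) ^ a) * ser a (fun j => if j < b then 1 else 0)
      = 1 - X ^ (a * b) := by
  rw [R_eq_geom ha b]
  have := mul_geom_sum ((X : PowerSeries ℤ) ^ a) b
  rw [pow_mul]
  have h2 : (1 - (X : PowerSeries ℤ) ^ a) = -(((X : PowerSeries ℤ) ^ a) - 1) := by ring
  rw [h2, neg_mul, this]
  ring

lemma telescope (x : PowerSeries ℤ) (L : ℕ) :
    (1 - x) * ∏ i ∈ Finset.range L, (1 + x ^ 2 ^ i) = 1 - x ^ 2 ^ L := by
  induction L with
  | zero => simp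
  | succ L ih =>
    rw [Finset.prod_range_succ, ← mul_assoc, ih]
    have : x ^ 2 ^ (L + 1) = (x ^ 2 ^ L) * (x ^ 2 ^ L) := by
      rw [← pow_add, pow_succ, mul_two]
    rw [this]
    ring

-- ## Substitution X ↦ X^c

/-- The map `f(X) ↦ f(X^c)`. -/
def phi (c : ℕ) (f : PowerSeries ℤ) : PowerSeries ℤ :=
  PowerSeries.mk fun k => if c ∣ k then coeff (k / c) f else 0

lemma coeff_phi (c : ℕ) (f : PowerSeries ℤ) (k : ℕ) :
    coeff k (phi c f) = if c ∣ k then coeff (k / c) f else 0 := coeff_mk _ _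

lemma phi_one {c : ℕ} (hc : 0 < c) : phi c 1 = 1 := by
  ext k
  rw [coeff_phi, coeff_one, coeff_one]
  by_cases hk : k = 0
  · subst hk
    rw [if_pos (Nat.dvd_zero c), if_pos (Nat.zero_div c), if_pos rfl]
  · rw [if_neg hk]
    split_ifs with h1 h2
    · exact absurd (by rw [← Nat.div_mul_cancel h1, h2, zero_mul]) hk
    · rfl
    · rfl

lemma phi_mul {c : ℕ} (hc : 0 < c) (f g : PowerSeries ℤ) :
    phi c (f * g) = phi c f * phi c g := by
  ext k
  have hr : coeff k (phi c f * phi c g) =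
      ∑ p ∈ (Finset.HasAntidiagonal.antidiagonal k).filter (fun p => c ∣ p.1 ∧ c ∣ p.2),
        coeff (p.1 / c) f * coeff (p.2 / c) g := by
    rw [coeff_mul]
    simp_rw [coeff_phi, ite_zero_mul_ite_zero]
    exact (Finset.sum_filter _ _).symm
  rw [hr, coeff_phi]
  by_cases hd : c ∣ k
  · rw [if_pos hd, coeff_mul]
    refine Finset.sum_nbij' (fun p => (c * p.1, c * p.2)) (fun p => (p.1 / c, p.2 / c))
      ?_ ?_ ?_ ?_ ?_
    · rintro ⟨u, v⟩ hp
      simp only [Finset.HasAntidiagonal.mem_antidiagonal] at hp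
      simp only [Finset.mem_filter, Finset.HasAntidiagonal.mem_antidiagonal]
      exact ⟨by rw [← Nat.mul_add, hp, Nat.mul_div_cancel' hd], ⟨u, rfl⟩, ⟨v, rfl⟩⟩
    · rintro ⟨x, y⟩ hp
      simp only [Finset.mem_filter, Finset.HasAntidiagonal.mem_antidiagonal] at hp
      obtain ⟨hxy, hx, hy⟩ := hp
      simp only [Finset.HasAntidiagonal.mem_antidiagonal]
      obtain ⟨u, rfl⟩ := hx
      obtain ⟨v, rfl⟩ := hy
      rw [Nat.mul_div_cancel_left _ hc, Nat.mul_div_cancel_left _ hc, ← hxy, ← Nat.mul_add,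
        Nat.mul_div_cancel_left _ hc]
    · rintro ⟨u, v⟩ _
      simp [Nat.mul_div_cancel_left _ hc]
    · rintro ⟨x, y⟩ hp
      simp only [Finset.mem_filter, Finset.HasAntidiagonal.mem_antidiagonal] at hp
      simp only [Prod.mk.injEq]
      exact ⟨Nat.mul_div_cancel' hp.2.1, Nat.mul_div_cancel' hp.2.2⟩
    · rintro ⟨u, v⟩ _
      simp [Nat.mul_div_cancel_left _ hc]
  · rw [if_neg hd]
    refine (Finset.sum_eq_zero fun p hp => ?_).symm
    exfalso
    simp only [Finset.mem_filter, Finset.HasAntidiagonal.mem_antidiagonal] at hp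
    exact hd (hp.1 ▸ Nat.dvd_add hp.2.1 hp.2.2)

lemma phi_prod {c : ℕ} (hc : 0 < c) {ι : Type*} (s : Finset ι) (f : ι → PowerSeries ℤ) :
    phi c (∏ i ∈ s, f i) = ∏ i ∈ s, phi c (f i) := by
  induction s using Finset.cons_induction with
  | empty => simpa using phi_one hc
  | cons a s ha ih => rw [Finset.prod_cons, Finset.prod_cons, phi_mul hc, ih]

lemma phi_ser {c a : ℕ} (hc : 0 < c) (ha : 0 < a) (g : ℕ → ℤ) :
    phi c (ser a g) = ser (c * a) g := by
  ext k
  rw [coeff_phi, coeff_ser, coeff_ser]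
  by_cases hd : c * a ∣ k
  · have hck : c ∣ k := dvd_of_mul_right_dvd hd
    rw [if_pos hck, if_pos hd, if_pos, Nat.div_div_eq_div_mul]
    exact (Nat.dvd_div_iff_mul_dvd hck).mpr hd
  · rw [if_neg hd]
    by_cases hck : c ∣ k
    · rw [if_pos hck, if_neg]
      intro hak
      exact hd ((Nat.dvd_div_iff_mul_dvd hck).mp hak)
    · rw [if_neg hck]

-- ## Gamma as a coefficient

theorem Gamma_eq (A : Set ℕ) (hA : ∀ a ∈ A, 0 < a) (Alpha n : ℕ) {m : ℕ} (hm : m ≤ n) :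
    Gamma A Alpha m = coeff m (∏ i ∈ Finset.range (n+1),
      phi (2 ^ i * (Alpha + 1)) (∏ a ∈ Sfin A n, ser a fun k => (-1) ^ k)) := by
  set L := n + 1 with hL
  set c : ℕ → ℕ := fun i => 2 ^ i * (Alpha + 1) with hc
  have hcpos : ∀ i, 0 < c i := fun i => by positivity
  set BS : PowerSeries ℤ := ∏ a ∈ Sfin A n, ser a fun k => (-1) ^ k with hBS
  set T : Finset (ℕ →₀ ℕ) := (Finset.finsuppAntidiag (Finset.range L) m).filter
    (fun l => ∀ i ∈ Finset.range L, c i ∣ l i) with hT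
  -- facts about members of T
  have hTfact : ∀ l ∈ T, (l.support ⊆ Finset.range L) ∧ (∑ i ∈ Finset.range L, l i = m)
      ∧ ∀ i ∈ Finset.range L, c i ∣ l i := by
    intro l hl
    simp only [hT, Finset.mem_filter, Finset.mem_finsuppAntidiag] at hl
    exact ⟨hl.1.2, hl.1.1, hl.2⟩
  have hle : ∀ l ∈ T, ∀ i, l i ≤ m := by
    intro l hl i
    obtain ⟨hsupp, hsum, -⟩ := hTfact l hl
    by_cases hi : i ∈ l.support
    · rw [← hsum]
      exact Finset.single_le_sum (fun _ _ => Nat.zero_le _) (hsupp hi)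
    · rw [Finsupp.notMem_support_iff.mp hi]
      exact Nat.zero_le _
  -- the down-scaling map
  set dn : (ℕ →₀ ℕ) → (ℕ →₀ ℕ) := fun l => Finsupp.onFinset l.support
    (fun i => l i / c i)
    (fun i h => by
      rw [Finsupp.mem_support_iff]
      intro h0
      exact h (by simp [h0])) with hdn
  have hdn_apply : ∀ l i, dn l i = l i / c i := fun l i => rfl
  -- RHS computation
  rw [coeff_prod]
  have hterm : ∀ l ∈ Finset.finsuppAntidiag (Finset.range L) m,
      (∏ i ∈ Finset.range L, coeff (l i) (phi (c i) BS)) =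
      if ∀ i ∈ Finset.range L, c i ∣ l i then ∏ i ∈ Finset.range L, coeff (l i / c i) BS
      else 0 := by
    intro l _
    simp_rw [coeff_phi]
    exact Finset.prod_ite_zero
  rw [Finset.sum_congr rfl hterm, ← Finset.sum_filter, ← hT]
  have hcoeffBS : ∀ l ∈ T, (∏ i ∈ Finset.range L, coeff (l i / c i) BS)
      = ∏ i ∈ Finset.range L, pBar A (l i / c i) := by
    intro l hl
    refine Finset.prod_congr rfl fun i _ => ?_
    rw [← pBar_eq A hA (n := n) ((Nat.div_le_self _ _).trans ((hle l hl i).trans hm))]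
  rw [Finset.sum_congr rfl hcoeffBS]
  -- LHS computation
  rw [Gamma]
  have hcond : ∀ f : ℕ →₀ ℕ,
      ((Alpha + 1) * (f.sum fun i N => 2 ^ i * N) = m) ↔ f ∈ T.image dn := by
    intro f
    constructor
    · intro hC
      have hsub : f.support ⊆ Finset.range L := by
        intro i hi
        have hfi : 0 < f i := Nat.pos_of_ne_zero (Finsupp.mem_support_iff.mp hi)
        have h1 : 2 ^ i * f i ≤ f.sum fun i N => 2 ^ i * N :=
          Finset.single_le_sum (f := fun j => 2 ^ j * f j) (fun _ _ => Nat.zero_le _) hi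
        have h2 : 2 ^ i ≤ m := by
          calc 2 ^ i ≤ 2 ^ i * f i := Nat.le_mul_of_pos_right _ hfi
          _ ≤ f.sum fun i N => 2 ^ i * N := h1
          _ ≤ (Alpha + 1) * (f.sum fun i N => 2 ^ i * N) := Nat.le_mul_of_pos_left _ (by omega)
          _ = m := hC
        have h3 : i < 2 ^ i := (Nat.lt_two_pow_self (n := i))
        simp only [Finset.mem_range, hL]
        omega
      set upf : ℕ →₀ ℕ := Finsupp.onFinset f.support (fun i => c i * f i)
        (fun i h => by
          rw [Finsupp.mem_support_iff]
          intro h0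
          exact h (by simp [h0])) with hupf
      have hupT : upf ∈ T := by
        simp only [hT, Finset.mem_filter, Finset.mem_finsuppAntidiag]
        have hsupp2 : upf.support ⊆ Finset.range L :=
          (Finsupp.support_onFinset_subset).trans hsub
        refine ⟨⟨?_, hsupp2⟩, fun i _ => Dvd.intro _ rfl⟩
        rw [← hC, Finsupp.sum, Finset.mul_sum]
        rw [Finset.sum_subset hsub (fun i _ hi => by
          simp [Finsupp.notMem_support_iff.mp hi])]
        refine Finset.sum_congr rfl fun i _ => ?_
        show c i * f i = (Alpha + 1) * (2 ^ i * f i)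
        simp only [hc]
        ring
      refine Finset.mem_image.mpr ⟨upf, hupT, ?_⟩
      ext i
      rw [hdn_apply]
      simp only [hupf, Finsupp.onFinset_apply]
      exact Nat.mul_div_cancel_left _ (hcpos i)
    · intro hf
      obtain ⟨l, hl, rfl⟩ := Finset.mem_image.mp hf
      obtain ⟨hsupp, hsum, hdvd⟩ := hTfact l hl
      have hsupdn : (dn l).support ⊆ Finset.range L :=
        (Finsupp.support_onFinset_subset).trans hsupp
      rw [Finsupp.sum, Finset.mul_sum]
      calc (∑ i ∈ (dn l).support, (Alpha + 1) * (2 ^ i * ((dn l) i)))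
          = ∑ i ∈ (dn l).support, l i := by
            refine Finset.sum_congr rfl fun i hi => ?_
            rw [hdn_apply, ← mul_assoc, mul_comm (Alpha + 1) (2 ^ i)]
            exact Nat.mul_div_cancel' (hdvd i (hsupdn hi))
        _ = ∑ i ∈ Finset.range L, l i := by
            refine Finset.sum_subset hsupdn fun i hiL hi => ?_
            have h0 : l i / c i = 0 := by
              have := Finsupp.notMem_support_iff.mp hi
              rwa [hdn_apply] at this
            have := Nat.mul_div_cancel' (hdvd i hiL)
            rw [h0, Nat.mul_zero] at this
            exact this.symm
        _ = m := hsum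
  rw [finsum_cond_eq_sum_of_cond_iff _ (fun {f} _ => hcond f)]
  have hinj : ∀ l₁ ∈ T, ∀ l₂ ∈ T, dn l₁ = dn l₂ → l₁ = l₂ := by
    intro l₁ h₁ l₂ h₂ h
    obtain ⟨hs₁, -, hd₁⟩ := hTfact l₁ h₁
    obtain ⟨hs₂, -, hd₂⟩ := hTfact l₂ h₂
    ext i
    by_cases hi : i ∈ Finset.range L
    · have e : (dn l₁) i = (dn l₂) i := by rw [h]
      rw [hdn_apply, hdn_apply] at e
      rw [← Nat.mul_div_cancel' (hd₁ i hi), ← Nat.mul_div_cancel' (hd₂ i hi), e]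
    · rw [Finsupp.notMem_support_iff.mp fun hc => hi (hs₁ hc),
        Finsupp.notMem_support_iff.mp fun hc => hi (hs₂ hc)]
  rw [Finset.sum_image hinj]
  refine Finset.sum_congr rfl fun l hl => ?_
  obtain ⟨hsupp, -, -⟩ := hTfact l hl
  have hsupdn : (dn l).support ⊆ Finset.range L :=
    (Finsupp.support_onFinset_subset).trans hsupp
  rw [finprod_eq_prod_of_mulSupport_subset _ (s := Finset.range L) ?_]
  · exact Finset.prod_congr rfl fun i _ => by rw [hdn_apply]
  · intro i hi
    simp only [Function.mem_mulSupport] at hi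
    by_contra hiL
    have h0 : l i = 0 :=
      Finsupp.notMem_support_iff.mp fun hx => hiL (Finset.mem_coe.mpr (hsupp hx))
    apply hi
    rw [hdn_apply, h0, Nat.zero_div, pBar_zero]

-- ## dropping high-order factors

lemma coeff_mul_one_sub_X_pow (h : PowerSeries ℤ) {n M : ℕ} (hM : n < M) :
    coeff n (h * (1 - X ^ M)) = coeff n h := by
  rw [mul_sub, mul_one, map_sub, coeff_mul_X_pow', if_neg (by omega : ¬ M ≤ n)]
  ring

lemma coeff_mul_prod_one_sub (h : PowerSeries ℤ) (n : ℕ) (s : Finset ℕ) (M : ℕ → ℕ)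
    (hM : ∀ a ∈ s, n < M a) :
    coeff n (h * ∏ a ∈ s, (1 - X ^ M a)) = coeff n h := by
  induction s using Finset.cons_induction with
  | empty => simp
  | cons a s ha ih =>
    rw [Finset.prod_cons, show h * ((1 - X ^ M a) * ∏ x ∈ s, (1 - X ^ M x))
        = (h * ∏ x ∈ s, (1 - X ^ M x)) * (1 - X ^ M a) by ring,
      coeff_mul_one_sub_X_pow _ (hM a (Finset.mem_cons_self a s)),
      ih (fun x hx => hM x (Finset.mem_cons.mpr (Or.inr hx)))]

-- ## the per-part factorization

lemma factor_one_sub (a b L : ℕ) (ha : 0 < a) (hb : 0 < b) :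
    (1 - (X : PowerSeries ℤ) ^ (a * b)) =
      (1 - X ^ (2 ^ L * b * a)) * ∏ i ∈ Finset.range L, ser (2 ^ i * b * a) (fun k => (-1) ^ k) := by
  have htel := telescope ((X : PowerSeries ℤ) ^ (a * b)) L
  have hpow : ∀ i : ℕ, ((X : PowerSeries ℤ) ^ (a * b)) ^ 2 ^ i = X ^ (2 ^ i * b * a) := by
    intro i
    rw [← pow_mul]
    congr 1
    ring
  have hJ : (∏ i ∈ Finset.range L, (1 + ((X : PowerSeries ℤ) ^ (a * b)) ^ 2 ^ i)) *
      (∏ i ∈ Finset.range L, ser (2 ^ i * b * a) (fun k => (-1) ^ k)) = 1 := by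
    rw [← Finset.prod_mul_distrib]
    refine Finset.prod_eq_one fun i _ => ?_
    rw [hpow i]
    exact Eser_mul_J (by positivity)
  calc (1 - (X : PowerSeries ℤ) ^ (a * b))
      = (1 - X ^ (a * b)) * ((∏ i ∈ Finset.range L, (1 + ((X : PowerSeries ℤ) ^ (a * b)) ^ 2 ^ i)) *
          (∏ i ∈ Finset.range L, ser (2 ^ i * b * a) (fun k => (-1) ^ k))) := by rw [hJ, mul_one]
    _ = ((1 - X ^ (a * b)) * ∏ i ∈ Finset.range L, (1 + ((X : PowerSeries ℤ) ^ (a * b)) ^ 2 ^ i)) *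
          (∏ i ∈ Finset.range L, ser (2 ^ i * b * a) (fun k => (-1) ^ k)) := by ring
    _ = (1 - ((X : PowerSeries ℤ) ^ (a * b)) ^ 2 ^ L) *
          (∏ i ∈ Finset.range L, ser (2 ^ i * b * a) (fun k => (-1) ^ k)) := by rw [htel]
    _ = (1 - X ^ (2 ^ L * b * a)) *
          (∏ i ∈ Finset.range L, ser (2 ^ i * b * a) (fun k => (-1) ^ k)) := by rw [hpow L]

lemma ser_R_factor {a : ℕ} (ha : 0 < a) (b : ℕ) :
    ser a (fun j => if j < b then (1:ℤ) else 0) = ser a (fun _ => 1) * (1 - X ^ (a * b)) := by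
  have h1 := Dser_mul_inv ha
  have h2 := Dser_mul_R ha b
  calc ser a (fun j => if j < b then (1:ℤ) else 0)
      = ((1 - (X : PowerSeries ℤ) ^ a) * ser a (fun _ => 1)) *
          ser a (fun j => if j < b then (1:ℤ) else 0) := by rw [h1, one_mul]
    _ = ser a (fun _ => 1) * ((1 - (X : PowerSeries ℤ) ^ a) *
          ser a (fun j => if j < b then (1:ℤ) else 0)) := by ring
    _ = ser a (fun _ => 1) * (1 - X ^ (a * b)) := by rw [h2]

end Stmt14Aux

open Stmt14Aux in
theorem stmt_14' (A : Set ℕ) (hA : ∀ a ∈ A, 0 < a) (α : ℕ) (hα : 1 ≤ α) (n : ℕ) :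
    (pAres A α n : ℤ) =
      ∑ i ∈ Finset.range (n + 1), (pA A (n - i) : ℤ) * Gamma A α i := by
  classical
  have hS := Sfin_pos hA n
  -- step 1: pAres as a coefficient
  have h0 : ((pAres A α n : ℤ)) = coeff n (∏ a ∈ Sfin A n,
      ser a fun j => if j < α + 1 then (1:ℤ) else 0) := by
    rw [pAres_eq A hA α n]
    congr 1
    refine Finset.prod_congr rfl fun a _ => ?_
    congr 1
    funext j
    simp [Nat.lt_succ_iff]
  -- step 2: factorization of the product
  have h1 : (∏ a ∈ Sfin A n, ser a fun j => if j < α + 1 then (1:ℤ) else 0)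
      = ((∏ a ∈ Sfin A n, ser a fun _ => (1:ℤ)) *
         ∏ i ∈ Finset.range (n+1), phi (2 ^ i * (α + 1))
           (∏ a ∈ Sfin A n, ser a fun k => (-1) ^ k)) *
        ∏ a ∈ Sfin A n, (1 - X ^ (2 ^ (n+1) * (α + 1) * a)) := by
    have e1 : ∀ a ∈ Sfin A n, ser a (fun j => if j < α + 1 then (1:ℤ) else 0)
        = ser a (fun _ => 1) * ((1 - X ^ (2 ^ (n+1) * (α + 1) * a)) *
            ∏ i ∈ Finset.range (n+1), ser (2 ^ i * (α + 1) * a) (fun k => (-1) ^ k)) := by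
      intro a haS
      rw [ser_R_factor (hS a haS) (α + 1), factor_one_sub a (α + 1) (n+1) (hS a haS) (by omega)]
    rw [Finset.prod_congr rfl e1, Finset.prod_mul_distrib]
    have e2 : (∏ a ∈ Sfin A n, ((1 - (X : PowerSeries ℤ) ^ (2 ^ (n+1) * (α + 1) * a)) *
          ∏ i ∈ Finset.range (n+1), ser (2 ^ i * (α + 1) * a) (fun k => (-1) ^ k)))
        = (∏ a ∈ Sfin A n, (1 - (X : PowerSeries ℤ) ^ (2 ^ (n+1) * (α + 1) * a))) *
          ∏ a ∈ Sfin A n, ∏ i ∈ Finset.range (n+1),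
            ser (2 ^ i * (α + 1) * a) (fun k => (-1) ^ k) := Finset.prod_mul_distrib
    have e3 : (∏ a ∈ Sfin A n, ∏ i ∈ Finset.range (n+1),
          ser (2 ^ i * (α + 1) * a) (fun k => (-1) ^ k))
        = ∏ i ∈ Finset.range (n+1), phi (2 ^ i * (α + 1))
            (∏ a ∈ Sfin A n, ser a fun k => (-1) ^ k) := by
      rw [Finset.prod_comm]
      refine Finset.prod_congr rfl fun i _ => ?_
      rw [phi_prod (by positivity)]
      exact Finset.prod_congr rfl fun a haS => (phi_ser (by positivity) (hS a haS) _).symm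
    rw [e2, e3]
    ring
  rw [h0, h1]
  rw [coeff_mul_prod_one_sub _ n (Sfin A n) _ (fun a haS => by
    have h2 : n < 2 ^ (n+1) := (Nat.lt_two_pow_self (n := n+1)) |>.trans_le' (by omega)
    have ha : 0 < a := hS a haS
    calc n < 2 ^ (n+1) := h2
      _ ≤ 2 ^ (n+1) * (α + 1) * a := Nat.le_mul_of_pos_right _ ha |>.trans'
          (Nat.le_mul_of_pos_right _ (by omega)))]
  rw [coeff_mul]
  rw [Finset.Nat.sum_antidiagonal_eq_sum_range_succ (fun x y =>
    coeff x (∏ a ∈ Sfin A n, ser a fun _ => (1:ℤ)) *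
    coeff y (∏ i ∈ Finset.range (n+1), phi (2 ^ i * (α + 1))
      (∏ a ∈ Sfin A n, ser a fun k => (-1) ^ k))) n]
  rw [← Finset.sum_range_reflect]
  refine Finset.sum_congr rfl fun j hj => ?_
  simp only [Finset.mem_range] at hj
  have hj' : j ≤ n := by omega
  have hnn : n + 1 - 1 - j = n - j := by omega
  rw [hnn, Nat.sub_sub_self hj']
  rw [← pA_eq A hA (Nat.sub_le n j), ← Gamma_eq A hA α n hj']


theorem stmt_14 (A : Set ℕ) (hA : ∀ a ∈ A, 0 < a) (α : ℕ) (hα : 1 ≤ α) (n : ℕ) :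
    (pAres A α n : ℤ) =
      ∑ i ∈ Finset.range (n + 1), (pA A (n - i) : ℤ) * Gamma A α i := by
  exact stmt_14' A hA α hα n
end
end

section
/- For |q| < 1, a positive integer α, and any injective ψ : ℕ → ℕ with positive values, ∏_{n≥1} (1 − q^{(α+1)ψ(n)})/(1 − q^{ψ(n)}) = ∏_{n≥1} 1/(1 − q^{ψ(n)}) · ∏_{i≥0} ∏_{n≥1} 1/(1 + q^{2^i (α+1) ψ(n)}). -/
open Filter Topology Finset

private lemma hasProd_inv_of_hasProd {ι : Type*} {f : ι → ℂ} {a : ℂ}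
    (h : HasProd f a) (ha : a ≠ 0) : HasProd (fun i => (f i)⁻¹) a⁻¹ := by
  have h2 := Filter.Tendsto.inv₀ h ha
  simpa [HasProd, Finset.prod_inv_distrib] using h2

private lemma aux_mult {ι : Type*} (z : ι → ℂ) (r : ℝ) (h0 : 0 ≤ r) (hr : r < 1)
    (hle : ∀ i, ‖z i‖ ≤ r) (hs : Summable fun i => ‖z i‖) :
    Multipliable (fun i => 1 + z i) ∧ (∏' i, (1 + z i)) ≠ 0 := by
  have hne : ∀ i, (1 : ℂ) + z i ≠ 0 := by
    intro i h
    have hz : z i = -1 := by linear_combination h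
    have h2 := hle i
    rw [hz] at h2
    simp at h2
    linarith
  have hC : ∀ i, ‖Complex.log (1 + z i)‖ ≤ (r * (1 - r)⁻¹ / 2 + 1) * ‖z i‖ := by
    intro i
    have h1 : ‖z i‖ < 1 := lt_of_le_of_lt (hle i) hr
    refine (Complex.norm_log_one_add_le h1).trans ?_
    have hzn : (0:ℝ) ≤ ‖z i‖ := norm_nonneg _
    have hinv : (1 - ‖z i‖)⁻¹ ≤ (1 - r)⁻¹ := by
      apply inv_anti₀ (by linarith) (by linarith [hle i])
    have key : ‖z i‖ ^ 2 * (1 - ‖z i‖)⁻¹ ≤ (r * ‖z i‖) * (1 - r)⁻¹ :=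
      mul_le_mul (by nlinarith [hle i]) hinv
        (inv_nonneg.mpr (by linarith)) (mul_nonneg h0 hzn)
    nlinarith [key]
  have hlog : Summable fun i => Complex.log (1 + z i) :=
    Summable.of_norm_bounded (hs.mul_left _) hC
  have hmul : Multipliable fun i => 1 + z i :=
    Complex.multipliable_of_summable_log hlog
  refine ⟨hmul, ?_⟩
  have h3 := Complex.cexp_tsum_eq_tprod hne hlog
  rw [← h3]
  exact Complex.exp_ne_zero _

private lemma aux_mult_sub {ι : Type*} (z : ι → ℂ) (r : ℝ) (h0 : 0 ≤ r) (hr : r < 1)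
    (hle : ∀ i, ‖z i‖ ≤ r) (hs : Summable fun i => ‖z i‖) :
    Multipliable (fun i => 1 - z i) ∧ (∏' i, (1 - z i)) ≠ 0 := by
  simp_rw [sub_eq_add_neg]
  exact aux_mult (fun i => -(z i)) r h0 hr (by simpa using hle) (by simpa using hs)

private lemma hasProd_geom_factor (x : ℂ) (hx : ‖x‖ < 1) :
    HasProd (fun i : ℕ => 1 + x ^ 2 ^ i) (1 - x)⁻¹ := by
  have hx1 : (1 : ℂ) - x ≠ 0 := by
    intro h
    have hxx : x = 1 := by linear_combination -h
    rw [hxx] at hx; simp at hx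
  have hsn : Summable fun i : ℕ => ‖x ^ 2 ^ i‖ := by
    refine Summable.of_nonneg_of_le (fun i => norm_nonneg _) (fun i => ?_)
      (summable_geometric_of_lt_one (norm_nonneg x) hx)
    rw [norm_pow]
    exact pow_le_pow_of_le_one (norm_nonneg x) hx.le (Nat.le_of_lt (Nat.lt_two_pow_self (n := i)))
  have hle : ∀ i : ℕ, ‖x ^ 2 ^ i‖ ≤ ‖x‖ := by
    intro i
    rw [norm_pow]
    calc ‖x‖ ^ 2 ^ i ≤ ‖x‖ ^ 1 :=
          pow_le_pow_of_le_one (norm_nonneg x) hx.le Nat.one_le_two_pow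
      _ = ‖x‖ := pow_one _
  obtain ⟨hm, -⟩ := aux_mult (fun i : ℕ => x ^ 2 ^ i) ‖x‖ (norm_nonneg x) hx hle hsn
  rw [hm.hasProd_iff_tendsto_nat]
  have key : ∀ N, ∏ i ∈ Finset.range N, (1 + x ^ 2 ^ i) = (1 - x)⁻¹ * (1 - x ^ 2 ^ N) := by
    intro N
    induction N with
    | zero =>
        simp only [Finset.range_zero, Finset.prod_empty, pow_zero, pow_one]
        exact (inv_mul_cancel₀ hx1).symm
    | succ n ih =>
        rw [Finset.prod_range_succ, ih]
        have h2 : x ^ 2 ^ (n + 1) = (x ^ 2 ^ n) ^ 2 := by rw [← pow_mul, pow_succ]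
        rw [h2]; ring
  simp_rw [key]
  have h2 : Tendsto (fun N : ℕ => x ^ 2 ^ N) atTop (𝓝 0) :=
    (tendsto_pow_atTop_nhds_zero_of_norm_lt_one hx).comp
      (tendsto_pow_atTop_atTop_of_one_lt (one_lt_two : (1:ℕ) < 2))
  have h3 : Tendsto (fun N : ℕ => (1 : ℂ) - x ^ 2 ^ N) atTop (𝓝 (1 - 0)) :=
    tendsto_const_nhds.sub h2
  simpa using h3.const_mul ((1 - x)⁻¹)

set_option maxHeartbeats 1000000 in
theorem stmt_15 (q : ℂ) (hq : ‖q‖ < 1) (ψ : ℕ → ℕ)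
    (hinj : Function.Injective ψ) (hpos : ∀ n, 1 ≤ ψ n)
    (α : ℕ) (hα : 1 ≤ α) :
    ∏' n : ℕ, (((1 : ℂ) - q ^ ((α + 1) * ψ n)) / ((1 : ℂ) - q ^ ψ n)) =
      (∏' n : ℕ, ((1 : ℂ) - q ^ ψ n)⁻¹) *
        ∏' i : ℕ, ∏' n : ℕ, ((1 : ℂ) + q ^ (2 ^ i * ((α + 1) * ψ n)))⁻¹ := by
  have h0 : (0:ℝ) ≤ ‖q‖ := norm_nonneg q
  have hgeo : Summable fun k : ℕ => ‖q‖ ^ k := summable_geometric_of_lt_one h0 hq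
  have hnq : ∀ e : ℕ, 1 ≤ e → ‖q ^ e‖ ≤ ‖q‖ := by
    intro e he
    rw [norm_pow]
    calc ‖q‖ ^ e ≤ ‖q‖ ^ 1 := pow_le_pow_of_le_one h0 hq.le he
      _ = ‖q‖ := pow_one _
  have hexp : ∀ n : ℕ, 1 ≤ (α + 1) * ψ n := by
    intro n; have := hpos n; exact Nat.one_le_iff_ne_zero.mpr (by positivity)
  -- summability of the three basic families
  have hψs : Summable fun n => ‖q ^ ψ n‖ := by
    simp_rw [norm_pow]
    exact hgeo.comp_injective hinj
  have hinj2 : Function.Injective fun n => (α + 1) * ψ n := by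
    intro a b h
    exact hinj (Nat.eq_of_mul_eq_mul_left (by omega) h)
  have hws : Summable fun n => ‖q ^ ((α + 1) * ψ n)‖ := by
    simp_rw [norm_pow]
    exact hgeo.comp_injective hinj2
  -- the two single products
  obtain ⟨MP, hPne⟩ := aux_mult_sub (fun n => q ^ ψ n) ‖q‖ h0 hq
    (fun n => hnq _ (hpos n)) hψs
  obtain ⟨MW, hWne⟩ := aux_mult_sub (fun n => q ^ ((α + 1) * ψ n)) ‖q‖ h0 hq
    (fun n => hnq _ (hexp n)) hws
  have HPinv : HasProd (fun n => ((1:ℂ) - q ^ ψ n)⁻¹) (∏' n, ((1:ℂ) - q ^ ψ n))⁻¹ :=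
    hasProd_inv_of_hasProd MP.hasProd hPne
  -- the double-indexed family
  have hexp2 : ∀ p : ℕ × ℕ, 2 ^ p.1 + ψ p.2 ≤ 2 ^ p.1 * ((α + 1) * ψ p.2) := by
    intro p
    have h1 : 1 ≤ 2 ^ p.1 := Nat.one_le_two_pow
    have h2 := hpos p.2
    calc 2 ^ p.1 + ψ p.2 ≤ 2 ^ p.1 * ψ p.2 + 2 ^ p.1 * ψ p.2 := by
          refine Nat.add_le_add ?_ ?_
          · exact Nat.le_mul_of_pos_right _ (by omega)
          · exact Nat.le_mul_of_pos_left _ (by omega)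
      _ = 2 ^ p.1 * (2 * ψ p.2) := by ring
      _ ≤ 2 ^ p.1 * ((α + 1) * ψ p.2) :=
          Nat.mul_le_mul_left _ (Nat.mul_le_mul_right _ (by omega))
  have hpow2 : Summable fun i : ℕ => ‖q‖ ^ 2 ^ i :=
    Summable.of_nonneg_of_le (fun i => pow_nonneg h0 _)
      (fun i => pow_le_pow_of_le_one h0 hq.le (Nat.le_of_lt (Nat.lt_two_pow_self (n := i)))) hgeo
  have hψr : Summable fun n => ‖q‖ ^ ψ n := hgeo.comp_injective hinj
  have hbig : Summable fun p : ℕ × ℕ => ‖q‖ ^ 2 ^ p.1 * ‖q‖ ^ ψ p.2 :=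
    hpow2.mul_of_nonneg hψr (fun i => pow_nonneg h0 _) (fun n => pow_nonneg h0 _)
  have hus : Summable fun p : ℕ × ℕ => ‖q ^ (2 ^ p.1 * ((α + 1) * ψ p.2))‖ := by
    refine Summable.of_nonneg_of_le (fun p => norm_nonneg _) (fun p => ?_) hbig
    rw [norm_pow, ← pow_add]
    exact pow_le_pow_of_le_one h0 hq.le (hexp2 p)
  have hleu : ∀ p : ℕ × ℕ, ‖q ^ (2 ^ p.1 * ((α + 1) * ψ p.2))‖ ≤ ‖q‖ := by
    intro p
    exact hnq _ (Nat.mul_pos (Nat.pow_pos (by omega)) (Nat.mul_pos (by omega) (hpos p.2)))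
  obtain ⟨Mu, hGne⟩ := aux_mult (fun p : ℕ × ℕ => q ^ (2 ^ p.1 * ((α + 1) * ψ p.2)))
    ‖q‖ h0 hq hleu hus
  have fiber : ∀ i : ℕ, Multipliable (fun n : ℕ => 1 + q ^ (2 ^ i * ((α + 1) * ψ n))) ∧
      (∏' n : ℕ, (1 + q ^ (2 ^ i * ((α + 1) * ψ n)))) ≠ 0 :=
    fun i => aux_mult _ ‖q‖ h0 hq (fun n => hleu (i, n)) (hus.prod_factor i)
  -- telescoping identity per n
  have htel : ∀ n : ℕ, HasProd (fun i : ℕ => 1 + q ^ (2 ^ i * ((α + 1) * ψ n)))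
      ((1 : ℂ) - q ^ ((α + 1) * ψ n))⁻¹ := by
    intro n
    have h1 : ‖q ^ ((α + 1) * ψ n)‖ < 1 := lt_of_le_of_lt (hnq _ (hexp n)) hq
    have h2 := hasProd_geom_factor (q ^ ((α + 1) * ψ n)) h1
    have heq : (fun i : ℕ => 1 + q ^ (2 ^ i * ((α + 1) * ψ n))) =
        fun i : ℕ => 1 + (q ^ ((α + 1) * ψ n)) ^ 2 ^ i := by
      funext i; rw [← pow_mul, mul_comm]
    rw [heq]; exact h2
  -- double product manipulations
  have E1 : ∏' p : ℕ × ℕ, ((1:ℂ) + q ^ (2 ^ p.1 * ((α + 1) * ψ p.2))) =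
      ∏' i : ℕ, ∏' n : ℕ, ((1:ℂ) + q ^ (2 ^ i * ((α + 1) * ψ n))) :=
    Multipliable.tprod_prod' Mu (fun i => (fiber i).1)
  have Ecomm : (∏' n : ℕ, ∏' i : ℕ, ((1:ℂ) + q ^ (2 ^ i * ((α + 1) * ψ n)))) =
      ∏' i : ℕ, ∏' n : ℕ, ((1:ℂ) + q ^ (2 ^ i * ((α + 1) * ψ n))) := by
    refine Multipliable.tprod_comm' ?_ (fun i => (fiber i).1) (fun n => (htel n).multipliable)
    exact Mu
  have MQ : Multipliable (fun i : ℕ => ∏' n : ℕ, ((1:ℂ) + q ^ (2 ^ i * ((α + 1) * ψ n)))) := by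
    refine (((Equiv.sigmaEquivProd ℕ ℕ).multipliable_iff.mpr Mu).sigma'
      (fun i => (fiber i).1)).congr (fun i => ?_)
    rfl
  have hQne : (∏' i : ℕ, ∏' n : ℕ, ((1:ℂ) + q ^ (2 ^ i * ((α + 1) * ψ n)))) ≠ 0 := by
    rw [← E1]; exact hGne
  -- evaluate the double product of inverses
  have Dinner : ∀ i : ℕ, ∏' n : ℕ, ((1:ℂ) + q ^ (2 ^ i * ((α + 1) * ψ n)))⁻¹ =
      (∏' n : ℕ, ((1:ℂ) + q ^ (2 ^ i * ((α + 1) * ψ n))))⁻¹ :=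
    fun i => (hasProd_inv_of_hasProd (fiber i).1.hasProd (fiber i).2).tprod_eq
  have Dval : ∏' i : ℕ, ∏' n : ℕ, ((1:ℂ) + q ^ (2 ^ i * ((α + 1) * ψ n)))⁻¹ =
      ∏' n : ℕ, ((1:ℂ) - q ^ ((α + 1) * ψ n)) := by
    rw [tprod_congr Dinner,
      (hasProd_inv_of_hasProd MQ.hasProd hQne).tprod_eq, ← Ecomm,
      tprod_congr (fun n => (htel n).tprod_eq),
      (hasProd_inv_of_hasProd MW.hasProd hWne).tprod_eq, inv_inv]
  rw [Dval, HPinv.tprod_eq]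
  have lhs_eq : ∏' n : ℕ, (((1 : ℂ) - q ^ ((α + 1) * ψ n)) / ((1 : ℂ) - q ^ ψ n)) =
      ∏' n : ℕ, (((1 : ℂ) - q ^ ((α + 1) * ψ n)) * ((1 : ℂ) - q ^ ψ n)⁻¹) := by
    simp_rw [div_eq_mul_inv]
  rw [lhs_eq, Multipliable.tprod_mul MW HPinv.multipliable, HPinv.tprod_eq, mul_comm]
end
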